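/- arXiv:2005.13245 — 13 statements merged into one kernel-verified Lean document; each statement's English description precedes it below -/
import Mathlib

section
/- In the proxy setup: if E[Y|A,D] is monotone in D, then RD_obs lies between RD_true and RD_crude, i.e. min(RD_true, RD_crude) ≤ RD_obs ≤ max(RD_true, RD_crude). -/
/-- p(c | x, v) = p(x|c) p(v|c) p(c) / (p(x|c) p(v|c) p(c) + p(x|c') p(v|c') p(c')),
with p(c') = 1 - p(c). -/
noncomputable def pcGiven (pxc pxc' pvc pvc' pc : ℝ) : ℝ :=
  pxc * pvc * pc / (pxc * pvc * pc + pxc' * pvc' * (1 - pc))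

/-- E[Y | x, v] = E[Y|x,c] * p(c|x,v) + E[Y|x,c'] * (1 - p(c|x,v)). -/
noncomputable def condExp (yc yc' w : ℝ) : ℝ := yc * w + yc' * (1 - w)

theorem between_of_prod_nonpos (t c o : ℝ) (h : (o - t) * (o - c) ≤ 0) :
    min t c ≤ o ∧ o ≤ max t c := by
  rcases mul_nonpos_iff.mp h with ⟨h1, h2⟩ | ⟨h1, h2⟩
  · exact ⟨le_trans (min_le_left _ _) (by linarith),
      le_trans (by linarith) (le_max_right _ _)⟩
  · exact ⟨le_trans (min_le_right _ _) (by linarith),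
      le_trans (by linarith) (le_max_left _ _)⟩


theorem sign_aux (ga gb Ma Mb Na Nb : ℝ) (hMa : 0 ≤ Ma) (hMb : 0 ≤ Mb)
    (hNa : 0 ≤ Na) (hNb : 0 ≤ Nb) (hgg : 0 ≤ ga * gb) :
    0 ≤ (ga * Ma + gb * Mb) * (ga * Na + gb * Nb) := by
  rcases mul_nonneg_iff.mp hgg with ⟨h1, h2⟩ | ⟨h1, h2⟩
  · exact mul_nonneg (add_nonneg (mul_nonneg h1 hMa) (mul_nonneg h2 hMb))
      (add_nonneg (mul_nonneg h1 hNa) (mul_nonneg h2 hNb))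
  · exact mul_nonneg_iff.mpr (Or.inr
      ⟨add_nonpos (mul_nonpos_of_nonpos_of_nonneg h1 hMa) (mul_nonpos_of_nonpos_of_nonneg h2 hMb),
       add_nonpos (mul_nonpos_of_nonpos_of_nonneg h1 hNa) (mul_nonpos_of_nonpos_of_nonneg h2 hNb)⟩)

theorem final_aux (p a e ga gb Ma Mb Na Nb : ℝ) (hp : 0 ≤ p) (hMa : 0 ≤ Ma) (hMb : 0 ≤ Mb)
    (hNa : 0 ≤ Na) (hNb : 0 ≤ Nb) (hgg : 0 ≤ ga * gb) :
    (p * a * (ga * Ma + gb * Mb)) * (-(p * p * a * (e * e)) * (ga * Na + gb * Nb)) ≤ 0 := by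
  have hS := sign_aux ga gb Ma Mb Na Nb hMa hMb hNa hNb hgg
  have hC : 0 ≤ p * p * p * (a * a) * (e * e) :=
    mul_nonneg (mul_nonneg (mul_nonneg (mul_nonneg hp hp) hp) (mul_self_nonneg a)) (mul_self_nonneg e)
  nlinarith [mul_nonneg hC hS]

set_option maxHeartbeats 1000000 in
/-- Proxy setup: if E[Y|A,D] is monotone in D, then RD_obs lies between
RD_true and RD_crude. -/
theorem stmt1 (pc pdc pdc' pac pac' Yac Yac' Ybc Ybc' : ℝ)
    (hpc0 : 0 < pc) (hpc1 : pc < 1)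
    (hpdc0 : 0 < pdc) (hpdc1 : pdc < 1) (hpdc'0 : 0 < pdc') (hpdc'1 : pdc' < 1)
    (hpac0 : 0 < pac) (hpac1 : pac < 1) (hpac'0 : 0 < pac') (hpac'1 : pac' < 1)
    (hne : pdc ≠ pdc')
    (hmonoD : (condExp Yac Yac' (pcGiven pac pac' pdc pdc' pc) ≥ condExp Yac Yac' (pcGiven pac pac' (1 - pdc) (1 - pdc') pc) ∧ condExp Ybc Ybc' (pcGiven (1 - pac) (1 - pac') pdc pdc' pc) ≥ condExp Ybc Ybc' (pcGiven (1 - pac) (1 - pac') (1 - pdc) (1 - pdc') pc)) ∨ (condExp Yac Yac' (pcGiven pac pac' pdc pdc' pc) ≤ condExp Yac Yac' (pcGiven pac pac' (1 - pdc) (1 - pdc') pc) ∧ condExp Ybc Ybc' (pcGiven (1 - pac) (1 - pac') pdc pdc' pc) ≤ condExp Ybc Ybc' (pcGiven (1 - pac) (1 - pac') (1 - pdc) (1 - pdc') pc))) :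
    min ((Yac - Ybc) * pc + (Yac' - Ybc') * (1 - pc)) (condExp Yac Yac' (pcGiven pac pac' 1 1 pc) - condExp Ybc Ybc' (pcGiven (1 - pac) (1 - pac') 1 1 pc)) ≤ ((condExp Yac Yac' (pcGiven pac pac' pdc pdc' pc) - condExp Ybc Ybc' (pcGiven (1 - pac) (1 - pac') pdc pdc' pc)) * (pdc * pc + pdc' * (1 - pc)) + (condExp Yac Yac' (pcGiven pac pac' (1 - pdc) (1 - pdc') pc) - condExp Ybc Ybc' (pcGiven (1 - pac) (1 - pac') (1 - pdc) (1 - pdc') pc)) * (1 - (pdc * pc + pdc' * (1 - pc)))) ∧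
    ((condExp Yac Yac' (pcGiven pac pac' pdc pdc' pc) - condExp Ybc Ybc' (pcGiven (1 - pac) (1 - pac') pdc pdc' pc)) * (pdc * pc + pdc' * (1 - pc)) + (condExp Yac Yac' (pcGiven pac pac' (1 - pdc) (1 - pdc') pc) - condExp Ybc Ybc' (pcGiven (1 - pac) (1 - pac') (1 - pdc) (1 - pdc') pc)) * (1 - (pdc * pc + pdc' * (1 - pc)))) ≤ max ((Yac - Ybc) * pc + (Yac' - Ybc') * (1 - pc)) (condExp Yac Yac' (pcGiven pac pac' 1 1 pc) - condExp Ybc Ybc' (pcGiven (1 - pac) (1 - pac') 1 1 pc)) := by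
  have hq : (0:ℝ) < 1 - pc := by linarith
  have haq : (0:ℝ) < 1 - pac := by linarith
  have haq' : (0:ℝ) < 1 - pac' := by linarith
  have hdq : (0:ℝ) < 1 - pdc := by linarith
  have hdq' : (0:ℝ) < 1 - pdc' := by linarith
  have hpq : (0:ℝ) < pc * (1 - pc) := mul_pos hpc0 hq
  have hD1 : (0:ℝ) < pac * pdc * pc + pac' * pdc' * (1 - pc) := by
    have := mul_pos (mul_pos hpac0 hpdc0) hpc0
    have := mul_pos (mul_pos hpac'0 hpdc'0) hq
    linarith
  have hD2 : (0:ℝ) < pac * (1 - pdc) * pc + pac' * (1 - pdc') * (1 - pc) := by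
    have := mul_pos (mul_pos hpac0 hdq) hpc0
    have := mul_pos (mul_pos hpac'0 hdq') hq
    linarith
  have hD3 : (0:ℝ) < (1 - pac) * pdc * pc + (1 - pac') * pdc' * (1 - pc) := by
    have := mul_pos (mul_pos haq hpdc0) hpc0
    have := mul_pos (mul_pos haq' hpdc'0) hq
    linarith
  have hD4 : (0:ℝ) < (1 - pac) * (1 - pdc) * pc + (1 - pac') * (1 - pdc') * (1 - pc) := by
    have := mul_pos (mul_pos haq hdq) hpc0
    have := mul_pos (mul_pos haq' hdq') hq
    linarith
  have hD5 : (0:ℝ) < pac * 1 * pc + pac' * 1 * (1 - pc) := by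
    have := mul_pos hpac0 hpc0
    have := mul_pos hpac'0 hq
    linarith
  have hD6 : (0:ℝ) < (1 - pac) * 1 * pc + (1 - pac') * 1 * (1 - pc) := by
    have := mul_pos haq hpc0
    have := mul_pos haq' hq
    linarith
  have hD1' := ne_of_gt hD1
  have hD2' := ne_of_gt hD2
  have hD3' := ne_of_gt hD3
  have hD4' := ne_of_gt hD4
  have hD5' := ne_of_gt hD5
  have hD6' := ne_of_gt hD6
  have hε : pdc - pdc' ≠ 0 := sub_ne_zero.mpr hne
  have hε2 : (0:ℝ) < (pdc - pdc') * (pdc - pdc') := by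
    rcases hε.lt_or_gt with h | h <;> nlinarith
  -- key sign fact : (Yac - Yac') * (Ybc - Ybc') ≥ 0
  have dA : (condExp Yac Yac' (pcGiven pac pac' pdc pdc' pc) -
        condExp Yac Yac' (pcGiven pac pac' (1 - pdc) (1 - pdc') pc)) *
        ((pac * pdc * pc + pac' * pdc' * (1 - pc)) *
          (pac * (1 - pdc) * pc + pac' * (1 - pdc') * (1 - pc))) =
      (Yac - Yac') * (pac * pac' * (pc * (1 - pc)) * (pdc - pdc')) := by
    simp only [condExp, pcGiven]
    field_simp
    ring
  have dB : (condExp Ybc Ybc' (pcGiven (1 - pac) (1 - pac') pdc pdc' pc) -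
        condExp Ybc Ybc' (pcGiven (1 - pac) (1 - pac') (1 - pdc) (1 - pdc') pc)) *
        (((1 - pac) * pdc * pc + (1 - pac') * pdc' * (1 - pc)) *
          ((1 - pac) * (1 - pdc) * pc + (1 - pac') * (1 - pdc') * (1 - pc))) =
      (Ybc - Ybc') * ((1 - pac) * (1 - pac') * (pc * (1 - pc)) * (pdc - pdc')) := by
    simp only [condExp, pcGiven]
    field_simp
    ring
  have hgg : 0 ≤ (Yac - Yac') * (Ybc - Ybc') := by
    have hp : 0 ≤ ((Yac - Yac') * (pac * pac' * (pc * (1 - pc)) * (pdc - pdc'))) *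
        ((Ybc - Ybc') * ((1 - pac) * (1 - pac') * (pc * (1 - pc)) * (pdc - pdc'))) := by
      rw [← dA, ← dB]
      rcases hmonoD with ⟨h1, h2⟩ | ⟨h1, h2⟩
      · exact mul_nonneg (mul_nonneg (sub_nonneg.2 h1) (mul_pos hD1 hD2).le)
          (mul_nonneg (sub_nonneg.2 h2) (mul_pos hD3 hD4).le)
      · exact mul_nonneg_iff.mpr (Or.inr
          ⟨mul_nonpos_of_nonpos_of_nonneg (sub_nonpos.2 h1) (mul_pos hD1 hD2).le,
           mul_nonpos_of_nonpos_of_nonneg (sub_nonpos.2 h2) (mul_pos hD3 hD4).le⟩)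
    have hKK : (0:ℝ) < (pac * pac' * (pc * (1 - pc))) *
        ((1 - pac) * (1 - pac') * (pc * (1 - pc))) * ((pdc - pdc') * (pdc - pdc')) :=
      mul_pos (mul_pos (mul_pos (mul_pos hpac0 hpac'0) hpq)
        (mul_pos (mul_pos haq haq') hpq)) hε2
    have key : ((Yac - Yac') * (pac * pac' * (pc * (1 - pc)) * (pdc - pdc'))) *
        ((Ybc - Ybc') * ((1 - pac) * (1 - pac') * (pc * (1 - pc)) * (pdc - pdc'))) =
        ((Yac - Yac') * (Ybc - Ybc')) * ((pac * pac' * (pc * (1 - pc))) *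
          ((1 - pac) * (1 - pac') * (pc * (1 - pc))) * ((pdc - pdc') * (pdc - pdc'))) := by ring
    rw [key] at hp
    exact le_of_mul_le_mul_right (by rw [zero_mul]; exact hp) hKK
  -- closed forms for O - T and O - C
  have e1 : ((condExp Yac Yac' (pcGiven pac pac' pdc pdc' pc) - condExp Ybc Ybc' (pcGiven (1 - pac) (1 - pac') pdc pdc' pc)) * (pdc * pc + pdc' * (1 - pc)) + (condExp Yac Yac' (pcGiven pac pac' (1 - pdc) (1 - pdc') pc) - condExp Ybc Ybc' (pcGiven (1 - pac) (1 - pac') (1 - pdc) (1 - pdc') pc)) * (1 - (pdc * pc + pdc' * (1 - pc)))) -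
      ((Yac - Ybc) * pc + (Yac' - Ybc') * (1 - pc)) =
      (pc * (1 - pc) * (pac - pac')) *
        ((Yac - Yac') * ((pdc * pdc' * (pac * (1 - pdc) * pc + pac' * (1 - pdc') * (1 - pc)) + (1 - pdc) * (1 - pdc') * (pac * pdc * pc + pac' * pdc' * (1 - pc))) /
            ((pac * pdc * pc + pac' * pdc' * (1 - pc)) * (pac * (1 - pdc) * pc + pac' * (1 - pdc') * (1 - pc)))) +
         (Ybc - Ybc') * ((pdc * pdc' * ((1 - pac) * (1 - pdc) * pc + (1 - pac') * (1 - pdc') * (1 - pc)) + (1 - pdc) * (1 - pdc') * ((1 - pac) * pdc * pc + (1 - pac') * pdc' * (1 - pc))) /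
            (((1 - pac) * pdc * pc + (1 - pac') * pdc' * (1 - pc)) * ((1 - pac) * (1 - pdc) * pc + (1 - pac') * (1 - pdc') * (1 - pc))))) := by
    have eA : condExp Yac Yac' (pcGiven pac pac' pdc pdc' pc) * (pdc * pc + pdc' * (1 - pc)) +
        condExp Yac Yac' (pcGiven pac pac' (1 - pdc) (1 - pdc') pc) * (1 - (pdc * pc + pdc' * (1 - pc))) -
        (Yac * pc + Yac' * (1 - pc)) =
        (pc * (1 - pc) * (pac - pac')) * ((Yac - Yac') * ((pdc * pdc' * (pac * (1 - pdc) * pc + pac' * (1 - pdc') * (1 - pc)) + (1 - pdc) * (1 - pdc') * (pac * pdc * pc + pac' * pdc' * (1 - pc))) /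
            ((pac * pdc * pc + pac' * pdc' * (1 - pc)) * (pac * (1 - pdc) * pc + pac' * (1 - pdc') * (1 - pc))))) := by
      simp only [condExp, pcGiven]
      field_simp
      ring
    have eB : condExp Ybc Ybc' (pcGiven (1 - pac) (1 - pac') pdc pdc' pc) * (pdc * pc + pdc' * (1 - pc)) +
        condExp Ybc Ybc' (pcGiven (1 - pac) (1 - pac') (1 - pdc) (1 - pdc') pc) * (1 - (pdc * pc + pdc' * (1 - pc))) -
        (Ybc * pc + Ybc' * (1 - pc)) =
        -((pc * (1 - pc) * (pac - pac')) * ((Ybc - Ybc') * ((pdc * pdc' * ((1 - pac) * (1 - pdc) * pc + (1 - pac') * (1 - pdc') * (1 - pc)) + (1 - pdc) * (1 - pdc') * ((1 - pac) * pdc * pc + (1 - pac') * pdc' * (1 - pc))) /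
            (((1 - pac) * pdc * pc + (1 - pac') * pdc' * (1 - pc)) * ((1 - pac) * (1 - pdc) * pc + (1 - pac') * (1 - pdc') * (1 - pc)))))) := by
      simp only [condExp, pcGiven]
      field_simp
      ring
    linear_combination eA - eB
  have e2 : ((condExp Yac Yac' (pcGiven pac pac' pdc pdc' pc) - condExp Ybc Ybc' (pcGiven (1 - pac) (1 - pac') pdc pdc' pc)) * (pdc * pc + pdc' * (1 - pc)) + (condExp Yac Yac' (pcGiven pac pac' (1 - pdc) (1 - pdc') pc) - condExp Ybc Ybc' (pcGiven (1 - pac) (1 - pac') (1 - pdc) (1 - pdc') pc)) * (1 - (pdc * pc + pdc' * (1 - pc)))) -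
      (condExp Yac Yac' (pcGiven pac pac' 1 1 pc) - condExp Ybc Ybc' (pcGiven (1 - pac) (1 - pac') 1 1 pc)) =
      (-((pc * (1 - pc)) * (pc * (1 - pc)) * (pac - pac') * ((pdc - pdc') * (pdc - pdc')))) *
        ((Yac - Yac') * (pac * pac' /
            ((pac * pdc * pc + pac' * pdc' * (1 - pc)) * (pac * (1 - pdc) * pc + pac' * (1 - pdc') * (1 - pc)) * (pac * 1 * pc + pac' * 1 * (1 - pc)))) +
         (Ybc - Ybc') * ((1 - pac) * (1 - pac') /
            (((1 - pac) * pdc * pc + (1 - pac') * pdc' * (1 - pc)) * ((1 - pac) * (1 - pdc) * pc + (1 - pac') * (1 - pdc') * (1 - pc)) * ((1 - pac) * 1 * pc + (1 - pac') * 1 * (1 - pc))))) := by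
    have eA : condExp Yac Yac' (pcGiven pac pac' pdc pdc' pc) * (pdc * pc + pdc' * (1 - pc)) +
        condExp Yac Yac' (pcGiven pac pac' (1 - pdc) (1 - pdc') pc) * (1 - (pdc * pc + pdc' * (1 - pc))) -
        condExp Yac Yac' (pcGiven pac pac' 1 1 pc) =
        (-((pc * (1 - pc)) * (pc * (1 - pc)) * (pac - pac') * ((pdc - pdc') * (pdc - pdc')))) * ((Yac - Yac') * (pac * pac' /
            ((pac * pdc * pc + pac' * pdc' * (1 - pc)) * (pac * (1 - pdc) * pc + pac' * (1 - pdc') * (1 - pc)) * (pac * 1 * pc + pac' * 1 * (1 - pc))))) := by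
      simp only [condExp, pcGiven]
      field_simp
      ring
    have eB : condExp Ybc Ybc' (pcGiven (1 - pac) (1 - pac') pdc pdc' pc) * (pdc * pc + pdc' * (1 - pc)) +
        condExp Ybc Ybc' (pcGiven (1 - pac) (1 - pac') (1 - pdc) (1 - pdc') pc) * (1 - (pdc * pc + pdc' * (1 - pc))) -
        condExp Ybc Ybc' (pcGiven (1 - pac) (1 - pac') 1 1 pc) =
        -((-((pc * (1 - pc)) * (pc * (1 - pc)) * (pac - pac') * ((pdc - pdc') * (pdc - pdc')))) * ((Ybc - Ybc') * ((1 - pac) * (1 - pac') /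
            (((1 - pac) * pdc * pc + (1 - pac') * pdc' * (1 - pc)) * ((1 - pac) * (1 - pdc) * pc + (1 - pac') * (1 - pdc') * (1 - pc)) * ((1 - pac) * 1 * pc + (1 - pac') * 1 * (1 - pc)))))) := by
      simp only [condExp, pcGiven]
      field_simp
      ring
    linear_combination eA - eB
  -- positive fraction facts
  have hMa : (0:ℝ) ≤ (pdc * pdc' * (pac * (1 - pdc) * pc + pac' * (1 - pdc') * (1 - pc)) + (1 - pdc) * (1 - pdc') * (pac * pdc * pc + pac' * pdc' * (1 - pc))) /
      ((pac * pdc * pc + pac' * pdc' * (1 - pc)) * (pac * (1 - pdc) * pc + pac' * (1 - pdc') * (1 - pc))) := by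
    apply div_nonneg _ (mul_pos hD1 hD2).le
    have := mul_pos (mul_pos hpdc0 hpdc'0) hD2
    have := mul_pos (mul_pos hdq hdq') hD1
    linarith
  have hMb : (0:ℝ) ≤ (pdc * pdc' * ((1 - pac) * (1 - pdc) * pc + (1 - pac') * (1 - pdc') * (1 - pc)) + (1 - pdc) * (1 - pdc') * ((1 - pac) * pdc * pc + (1 - pac') * pdc' * (1 - pc))) /
      (((1 - pac) * pdc * pc + (1 - pac') * pdc' * (1 - pc)) * ((1 - pac) * (1 - pdc) * pc + (1 - pac') * (1 - pdc') * (1 - pc))) := by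
    apply div_nonneg _ (mul_pos hD3 hD4).le
    have := mul_pos (mul_pos hpdc0 hpdc'0) hD4
    have := mul_pos (mul_pos hdq hdq') hD3
    linarith
  have hNa : (0:ℝ) ≤ pac * pac' /
      ((pac * pdc * pc + pac' * pdc' * (1 - pc)) * (pac * (1 - pdc) * pc + pac' * (1 - pdc') * (1 - pc)) * (pac * 1 * pc + pac' * 1 * (1 - pc))) :=
    div_nonneg (mul_pos hpac0 hpac'0).le (mul_pos (mul_pos hD1 hD2) hD5).le
  have hNb : (0:ℝ) ≤ (1 - pac) * (1 - pac') /
      (((1 - pac) * pdc * pc + (1 - pac') * pdc' * (1 - pc)) * ((1 - pac) * (1 - pdc) * pc + (1 - pac') * (1 - pdc') * (1 - pc)) * ((1 - pac) * 1 * pc + (1 - pac') * 1 * (1 - pc))) :=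
    div_nonneg (mul_pos haq haq').le (mul_pos (mul_pos hD3 hD4) hD6).le
  apply between_of_prod_nonpos
  rw [e1, e2]
  exact final_aux _ _ _ _ _ _ _ _ _ hpq.le hMa hMb hNa hNb hgg
end

section
/- In the proxy setup (without requiring p(d|c) ≠ p(d|c')): suppose p(c) = 1/2 and p(a|c) = 1−p(a|c') = p(d|c) = 1−p(d|c') ≥ 1/2 (i.e., p(a|c) = p(a'|c') = p(d|c) = p(d'|c') ≥ 1/2). If E[Y|a,c] − E[Y|a,c'] ≥ E[Y|a',c'] − E[Y|a',c] ≥ 0, then RD_crude ≥ RD_obs ≥ RD_true. -/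
set_option maxHeartbeats 1600000


/-- Proxy setup, nonmonotone case: if p(c) = 1/2,
p(a|c) = p(a'|c') = p(d|c) = p(d'|c') ≥ 1/2 and
E[Y|a,c] - E[Y|a,c'] ≥ E[Y|a',c'] - E[Y|a',c] ≥ 0,
then RD_crude ≥ RD_obs ≥ RD_true. -/
theorem stmt2 (pc pdc pdc' pac pac' Yac Yac' Ybc Ybc' : ℝ)
    (hpc0 : 0 < pc) (hpc1 : pc < 1)
    (hpdc0 : 0 < pdc) (hpdc1 : pdc < 1) (hpdc'0 : 0 < pdc') (hpdc'1 : pdc' < 1)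
    (hpac0 : 0 < pac) (hpac1 : pac < 1) (hpac'0 : 0 < pac') (hpac'1 : pac' < 1)
    (hc : pc = 1/2)
    (h1 : pac = 1 - pac') (h2 : pac = pdc) (h3 : pdc = 1 - pdc') (h4 : 1/2 ≤ pac)
    (hY1 : Yac - Yac' ≥ Ybc' - Ybc) (hY2 : Ybc' - Ybc ≥ 0) :
    (condExp Yac Yac' (pcGiven pac pac' 1 1 pc) - condExp Ybc Ybc' (pcGiven (1 - pac) (1 - pac') 1 1 pc)) ≥ ((condExp Yac Yac' (pcGiven pac pac' pdc pdc' pc) - condExp Ybc Ybc' (pcGiven (1 - pac) (1 - pac') pdc pdc' pc)) * (pdc * pc + pdc' * (1 - pc)) + (condExp Yac Yac' (pcGiven pac pac' (1 - pdc) (1 - pdc') pc) - condExp Ybc Ybc' (pcGiven (1 - pac) (1 - pac') (1 - pdc) (1 - pdc') pc)) * (1 - (pdc * pc + pdc' * (1 - pc)))) ∧ ((condExp Yac Yac' (pcGiven pac pac' pdc pdc' pc) - condExp Ybc Ybc' (pcGiven (1 - pac) (1 - pac') pdc pdc' pc)) * (pdc * pc + pdc' * (1 - pc)) + (condExp Yac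 Yac' (pcGiven pac pac' (1 - pdc) (1 - pdc') pc) - condExp Ybc Ybc' (pcGiven (1 - pac) (1 - pac') (1 - pdc) (1 - pdc') pc)) * (1 - (pdc * pc + pdc' * (1 - pc)))) ≥ ((Yac - Ybc) * pc + (Yac' - Ybc') * (1 - pc)) := by
  subst hc
  have e1 : pac' = 1 - pac := by linarith
  have e2 : pdc = pac := h2.symm
  have e3 : pdc' = 1 - pac := by linarith
  subst e1 e2 e3
  have hp : (1:ℝ)/2 ≤ pdc := h4
  have hq : 0 < 1 - pdc := by linarith
  have hD : 0 < pdc^2 + (1 - pdc)^2 := by positivity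
  have hpq : 0 < pdc * (1 - pdc) := by positivity
  obtain ⟨w, hw⟩ : ∃ w : ℝ, w = pdc^2 / (pdc^2 + (1 - pdc)^2) := ⟨_, rfl⟩
  have T1 : pcGiven pdc (1 - pdc) 1 1 (1/2) = pdc := by
    unfold pcGiven; rw [div_eq_iff (by nlinarith)]; ring
  have T2 : pcGiven (1 - pdc) (1 - (1 - pdc)) 1 1 (1/2) = 1 - pdc := by
    unfold pcGiven; rw [div_eq_iff (by nlinarith)]; ring
  have T3 : pcGiven pdc (1 - pdc) pdc (1 - pdc) (1/2) = w := by
    unfold pcGiven; rw [hw, div_eq_div_iff (by nlinarith) (ne_of_gt hD)]; ring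
  have T4 : pcGiven (1 - pdc) (1 - (1 - pdc)) pdc (1 - pdc) (1/2) = 1/2 := by
    unfold pcGiven; rw [div_eq_iff (by nlinarith)]; ring
  have T5 : pcGiven pdc (1 - pdc) (1 - pdc) (1 - (1 - pdc)) (1/2) = 1/2 := by
    unfold pcGiven; rw [div_eq_iff (by nlinarith)]; ring
  have T6 : pcGiven (1 - pdc) (1 - (1 - pdc)) (1 - pdc) (1 - (1 - pdc)) (1/2) = 1 - w := by
    unfold pcGiven
    rw [hw, eq_sub_iff_add_eq, div_add_div _ _ (by nlinarith) (ne_of_gt hD),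
      div_eq_iff (ne_of_gt (by nlinarith : (0:ℝ) < ((1 - pdc) * (1 - pdc) * (1/2) + (1 - (1 - pdc)) * (1 - (1 - pdc)) * (1 - 1/2)) * (pdc^2 + (1 - pdc)^2)))]
    ring
  rw [T1, T2, T3, T4, T5, T6]
  have hw1 : 1/2 ≤ w := by
    rw [hw, le_div_iff₀ hD]; nlinarith
  have hw2 : w - 1/2 ≤ 2 * (pdc - 1/2) := by
    rw [hw, div_sub' (ne_of_gt hD), div_le_iff₀ hD]
    nlinarith [sq_nonneg (pdc - 1/2), sq_nonneg (2*pdc - 1)]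
  unfold condExp
  constructor
  · nlinarith [mul_nonneg (by linarith : (0:ℝ) ≤ 2*(pdc - 1/2) - (w - 1/2)) (by linarith : (0:ℝ) ≤ (Yac - Yac') - (Ybc' - Ybc)),
      mul_nonneg (by linarith : (0:ℝ) ≤ pdc - 1/2) (by linarith : (0:ℝ) ≤ Ybc' - Ybc)]
  · nlinarith [mul_nonneg (by linarith : (0:ℝ) ≤ w - 1/2) (by linarith : (0:ℝ) ≤ (Yac - Yac') - (Ybc' - Ybc))]
end

section
/- In the proxy setup (without requiring p(d|c) ≠ p(d|c')): suppose p(c) = 1/2 and p(a|c) = 1−p(a|c') = p(d|c) = 1−p(d|c') ≥ 1/2 (i.e., p(a|c) = p(a'|c') = p(d|c) = p(d'|c') ≥ 1/2). If E[Y|a,c] − E[Y|a,c'] ≤ E[Y|a',c'] − E[Y|a',c] ≤ 0, then RD_crude ≤ RD_obs ≤ RD_true. -/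
/-- Proxy setup, nonmonotone case: if p(c) = 1/2,
p(a|c) = p(a'|c') = p(d|c) = p(d'|c') ≥ 1/2 and
E[Y|a,c] - E[Y|a,c'] ≤ E[Y|a',c'] - E[Y|a',c] ≤ 0,
then RD_crude ≤ RD_obs ≤ RD_true. -/
theorem stmt3 (pc pdc pdc' pac pac' Yac Yac' Ybc Ybc' : ℝ)
    (hpc0 : 0 < pc) (hpc1 : pc < 1)
    (hpdc0 : 0 < pdc) (hpdc1 : pdc < 1) (hpdc'0 : 0 < pdc') (hpdc'1 : pdc' < 1)
    (hpac0 : 0 < pac) (hpac1 : pac < 1) (hpac'0 : 0 < pac') (hpac'1 : pac' < 1)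
    (hc : pc = 1/2)
    (h1 : pac = 1 - pac') (h2 : pac = pdc) (h3 : pdc = 1 - pdc') (h4 : 1/2 ≤ pac)
    (hY1 : Yac - Yac' ≤ Ybc' - Ybc) (hY2 : Ybc' - Ybc ≤ 0) :
    (condExp Yac Yac' (pcGiven pac pac' 1 1 pc) - condExp Ybc Ybc' (pcGiven (1 - pac) (1 - pac') 1 1 pc)) ≤ ((condExp Yac Yac' (pcGiven pac pac' pdc pdc' pc) - condExp Ybc Ybc' (pcGiven (1 - pac) (1 - pac') pdc pdc' pc)) * (pdc * pc + pdc' * (1 - pc)) + (condExp Yac Yac' (pcGiven pac pac' (1 - pdc) (1 - pdc') pc) - condExp Ybc Ybc' (pcGiven (1 - pac) (1 - pac') (1 - pdc) (1 - pdc') pc)) * (1 - (pdc * pc + pdc' * (1 - pc)))) ∧ ((condExp Yac Yac' (pcGiven pac pac' pdc pdc' pc) - condExp Ybc Ybc' (pcGiven (1 - pac) (1 - pac') pdc pdc' pc)) * (pdc * pc + pdc' * (1 - pc)) + (condExp Yac Yac' (pcGiven pac pac' (1 - pdc) (1 - pdc') pc) - condExp Ybc Ybc' (pcGiven (1 - pac)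 (1 - pac') (1 - pdc) (1 - pdc') pc)) * (1 - (pdc * pc + pdc' * (1 - pc)))) ≤ ((Yac - Ybc) * pc + (Yac' - Ybc') * (1 - pc)) := by
  have e1 : pac' = 1 - pac := by linarith
  have e2 : pdc = pac := h2.symm
  have e3 : pdc' = 1 - pac := by linarith
  subst e1 e2 e3 hc
  set p := pdc with hp
  clear_value p
  have hp0 : 0 < p := hpdc0
  have hp1 : p < 1 := hpdc1
  have hph : 1/2 ≤ p := h4
  clear hpdc0 hpdc1 hpdc'0 hpdc'1 hpac0 hpac1 hpac'0 hpac'1 h1 h2 h3 h4 hp hpc0 hpc1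
  have hD : 0 < p * p + (1 - p) * (1 - p) := by nlinarith
  have hDne : p * p + (1 - p) * (1 - p) ≠ 0 := ne_of_gt hD
  have hA : pcGiven p (1 - p) 1 1 (1/2) = p := by
    unfold pcGiven; field_simp; ring
  have hB : pcGiven (1 - p) (1 - (1 - p)) 1 1 (1/2) = 1 - p := by
    unfold pcGiven; field_simp; ring
  have hW : pcGiven p (1 - p) p (1 - p) (1/2) = p * p / (p * p + (1 - p) * (1 - p)) := by
    unfold pcGiven
    rw [div_eq_div_iff (by nlinarith) hDne]
    ring
  have hW' : pcGiven (1 - p) (1 - (1 - p)) p (1 - p) (1/2) = 1/2 := by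
    unfold pcGiven
    rw [div_eq_div_iff (by nlinarith) (by norm_num : (2:ℝ) ≠ 0)]
    ring
  have hH : pcGiven p (1 - p) (1 - p) (1 - (1 - p)) (1/2) = 1/2 := by
    unfold pcGiven
    rw [div_eq_div_iff (by nlinarith) (by norm_num : (2:ℝ) ≠ 0)]
    ring
  have hH' : pcGiven (1 - p) (1 - (1 - p)) (1 - p) (1 - (1 - p)) (1/2)
      = (1 - p) * (1 - p) / (p * p + (1 - p) * (1 - p)) := by
    unfold pcGiven
    rw [div_eq_div_iff (by nlinarith) hDne]
    ring
  rw [hA, hB, hW, hW', hH, hH']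
  unfold condExp
  set w : ℝ := p * p / (p * p + (1 - p) * (1 - p)) with hw
  set w' : ℝ := (1 - p) * (1 - p) / (p * p + (1 - p) * (1 - p)) with hw'
  have hw1 : w * (p * p + (1 - p) * (1 - p)) = p * p := by
    rw [hw]; field_simp
  have hw'1 : w' * (p * p + (1 - p) * (1 - p)) = (1 - p) * (1 - p) := by
    rw [hw']; field_simp
  have hsum : w + w' = 1 := by
    rw [hw, hw', ← add_div, div_eq_one_iff_eq hDne]
  have hcube : 0 ≤ (2*p - 1)^3 := pow_nonneg (by linarith) 3
  have hwp : p ≤ w := by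
    rw [hw, le_div_iff₀ hD]
    nlinarith [mul_nonneg (mul_nonneg hp0.le (by linarith : (0:ℝ) ≤ 2*p - 1)) (by linarith : (0:ℝ) ≤ 1 - p)]
  have hkey : w ≤ 2*p - 1/2 := by
    rw [hw, div_le_iff₀ hD]
    nlinarith [hcube]
  clear_value w w'
  have hw2 : w' = 1 - w := by linarith
  subst hw2
  have hm : Yac - Yac' + Ybc - Ybc' ≤ 0 := by linarith
  have hwhalf : 1/2 ≤ w := by linarith
  rw [show p * (1/2) + (1 - p) * (1 - 1/2) = 1/2 by ring]
  constructor
  · linarith [mul_nonneg (by linarith : (0:ℝ) ≤ -(Yac - Yac' + Ybc - Ybc')) (by linarith : (0:ℝ) ≤ 2*p - 1/2 - w)]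
  · linarith [mul_nonneg (by linarith : (0:ℝ) ≤ -(Yac - Yac' + Ybc - Ybc')) (by linarith : (0:ℝ) ≤ w - 1/2)]
end

section
/- In the proxy setup (without requiring p(d|c) ≠ p(d|c')): suppose p(c) = 1/2, p(d|c) = 1−p(d|c') ≥ 1/2 (i.e., p(d|c) = p(d'|c')), and 1−p(a|c') ≥ p(a|c) ≥ 1/2 (i.e., p(a'|c') ≥ p(a|c) ≥ 1/2). If E[Y|a,c] − E[Y|a,c'] ≥ E[Y|a',c'] − E[Y|a',c] ≥ 0, then RD_crude ≥ RD_true and RD_obs ≥ RD_true. -/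
set_option maxHeartbeats 1000000

private lemma combineIneq (YA YB X Z : ℝ) (h1 : YB ≤ YA) (h2 : 0 ≤ YB)
    (hX : 0 ≤ X) (hXZ : 0 ≤ X + Z) : 0 ≤ YA * X + YB * Z := by nlinarith

private lemma half_shift (n D : ℝ) (hD : D ≠ 0) : n / D - 1/2 = (2*n - D) / (2*D) := by
  field_simp

/-- Proxy setup: if p(c) = 1/2, p(d|c) = p(d'|c') ≥ 1/2,
p(a'|c') ≥ p(a|c) ≥ 1/2 and E[Y|a,c] - E[Y|a,c'] ≥ E[Y|a',c'] - E[Y|a',c] ≥ 0,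
then RD_crude ≥ RD_true and RD_obs ≥ RD_true. -/
theorem stmt4 (pc pdc pdc' pac pac' Yac Yac' Ybc Ybc' : ℝ)
    (hpc0 : 0 < pc) (hpc1 : pc < 1)
    (hpdc0 : 0 < pdc) (hpdc1 : pdc < 1) (hpdc'0 : 0 < pdc') (hpdc'1 : pdc' < 1)
    (hpac0 : 0 < pac) (hpac1 : pac < 1) (hpac'0 : 0 < pac') (hpac'1 : pac' < 1)
    (hc : pc = 1/2)
    (hd : pdc = 1 - pdc') (hd2 : 1/2 ≤ pdc)
    (ha1 : pac ≤ 1 - pac') (ha2 : 1/2 ≤ pac)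
    (hY1 : Yac - Yac' ≥ Ybc' - Ybc) (hY2 : Ybc' - Ybc ≥ 0) :
    (condExp Yac Yac' (pcGiven pac pac' 1 1 pc) - condExp Ybc Ybc' (pcGiven (1 - pac) (1 - pac') 1 1 pc)) ≥ ((Yac - Ybc) * pc + (Yac' - Ybc') * (1 - pc)) ∧ ((condExp Yac Yac' (pcGiven pac pac' pdc pdc' pc) - condExp Ybc Ybc' (pcGiven (1 - pac) (1 - pac') pdc pdc' pc)) * (pdc * pc + pdc' * (1 - pc)) + (condExp Yac Yac' (pcGiven pac pac' (1 - pdc) (1 - pdc') pc) - condExp Ybc Ybc' (pcGiven (1 - pac) (1 - pac') (1 - pdc) (1 - pdc') pc)) * (1 - (pdc * pc + pdc' * (1 - pc)))) ≥ ((Yac - Ybc) * pc + (Yac' - Ybc') * (1 - pc)) := by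
  subst hc hd
  have hq0 : (0:ℝ) < pdc' := hpdc'0
  have hq1 : pdc' ≤ 1/2 := by linarith
  have hd0 : (0:ℝ) < 1 - pdc' := by linarith
  have hpq : pac' ≤ pac := by linarith
  have hs1 : pac + pac' ≤ 1 := by linarith
  have hY1' : Ybc' - Ybc ≤ Yac - Yac' := hY1
  have hY2' : (0:ℝ) ≤ Ybc' - Ybc := hY2
  constructor
  · -- crude
    rw [ge_iff_le, ← sub_nonneg]
    unfold condExp pcGiven
    have hA : (0:ℝ) < pac * 1 * (1/2) + pac' * 1 * (1 - 1/2) := by nlinarith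
    have hB : (0:ℝ) < (1 - pac) * 1 * (1/2) + (1 - pac') * 1 * (1 - 1/2) := by nlinarith
    have hX : (0:ℝ) ≤ pac * 1 * (1/2) / (pac * 1 * (1/2) + pac' * 1 * (1 - 1/2)) - 1/2 := by
      rw [half_shift _ _ hA.ne']
      apply div_nonneg (by nlinarith) (by nlinarith)
    have hXZ : (0:ℝ) ≤ (pac * 1 * (1/2) / (pac * 1 * (1/2) + pac' * 1 * (1 - 1/2)) - 1/2)
        + ((1 - pac) * 1 * (1/2) / ((1 - pac) * 1 * (1/2) + (1 - pac') * 1 * (1 - 1/2)) - 1/2) := by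
      rw [half_shift _ _ hA.ne', half_shift _ _ hB.ne',
        div_add_div _ _ (by positivity) (by positivity)]
      apply div_nonneg ?_ (by positivity)
      nlinarith [mul_nonneg (sub_nonneg.2 hpq) (sub_nonneg.2 hs1)]
    have key := combineIneq (Yac - Yac') (Ybc' - Ybc)
      (pac * 1 * (1/2) / (pac * 1 * (1/2) + pac' * 1 * (1 - 1/2)) - 1/2)
      ((1 - pac) * 1 * (1/2) / ((1 - pac) * 1 * (1/2) + (1 - pac') * 1 * (1 - 1/2)) - 1/2)
      hY1' hY2' hX hXZ
    nlinarith [key]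
  · -- observed
    rw [ge_iff_le, ← sub_nonneg]
    unfold condExp pcGiven
    have hA1 : (0:ℝ) < pac * (1 - pdc') * (1/2) + pac' * pdc' * (1 - 1/2) := by nlinarith
    have hA2 : (0:ℝ) < pac * (1 - (1 - pdc')) * (1/2) + pac' * (1 - pdc') * (1 - 1/2) := by nlinarith
    have hB1 : (0:ℝ) < (1 - pac) * (1 - pdc') * (1/2) + (1 - pac') * pdc' * (1 - 1/2) := by nlinarith
    have hB2 : (0:ℝ) < (1 - pac) * (1 - (1 - pdc')) * (1/2) + (1 - pac') * (1 - pdc') * (1 - 1/2) := by nlinarith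
    have hX : (0:ℝ) ≤ (pac * (1 - pdc') * (1/2) / (pac * (1 - pdc') * (1/2) + pac' * pdc' * (1 - 1/2)) - 1/2)
        + (pac * (1 - (1 - pdc')) * (1/2) / (pac * (1 - (1 - pdc')) * (1/2) + pac' * (1 - pdc') * (1 - 1/2)) - 1/2) := by
      rw [half_shift _ _ hA1.ne', half_shift _ _ hA2.ne',
        div_add_div _ _ (by positivity) (by positivity)]
      apply div_nonneg ?_ (by positivity)
      nlinarith [mul_nonneg (mul_nonneg (sub_nonneg.2 hpq) (by nlinarith : (0:ℝ) ≤ pac + pac'))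
        (mul_nonneg hd0.le hq0.le)]
    have hXZ : (0:ℝ) ≤ ((pac * (1 - pdc') * (1/2) / (pac * (1 - pdc') * (1/2) + pac' * pdc' * (1 - 1/2)) - 1/2)
        + (pac * (1 - (1 - pdc')) * (1/2) / (pac * (1 - (1 - pdc')) * (1/2) + pac' * (1 - pdc') * (1 - 1/2)) - 1/2))
        + (((1 - pac) * (1 - pdc') * (1/2) / ((1 - pac) * (1 - pdc') * (1/2) + (1 - pac') * pdc' * (1 - 1/2)) - 1/2)
        + ((1 - pac) * (1 - (1 - pdc')) * (1/2) / ((1 - pac) * (1 - (1 - pdc')) * (1/2) + (1 - pac') * (1 - pdc') * (1 - 1/2)) - 1/2)) := by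
      rw [half_shift _ _ hA1.ne', half_shift _ _ hA2.ne', half_shift _ _ hB1.ne', half_shift _ _ hB2.ne',
        div_add_div _ _ (by positivity) (by positivity),
        div_add_div _ _ (by positivity) (by positivity),
        div_add_div _ _ (by positivity) (by positivity)]
      apply div_nonneg ?_ (by positivity)
      have hfac : (0:ℝ) ≤ ((1 - pdc') * pdc') * ((pac - pac') * ((2 - 2*pac - 2*pac') *
          ((pac + pac') * (2 - pac - pac') / 4 + ((pac - pac') * (1/2 - pdc'))^2))) := by
        apply mul_nonneg (by nlinarith)
        apply mul_nonneg (by linarith)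
        apply mul_nonneg (by linarith)
        nlinarith [sq_nonneg ((pac - pac') * (1/2 - pdc'))]
      nlinarith [hfac]
    have key := combineIneq (Yac - Yac') (Ybc' - Ybc) _ _ hY1' hY2' hX hXZ
    linarith [key]
end

section
/- In the proxy setup (without requiring p(d|c) ≠ p(d|c')): suppose p(c) = 1/2, p(d|c) = 1−p(d|c') ≥ 1/2 (i.e., p(d|c) = p(d'|c')), and 1−p(a|c') ≥ p(a|c) ≥ 1/2 (i.e., p(a'|c') ≥ p(a|c) ≥ 1/2). If E[Y|a,c] − E[Y|a,c'] ≤ E[Y|a',c'] − E[Y|a',c] ≤ 0, then RD_crude ≤ RD_true and RD_obs ≤ RD_true. -/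
lemma key1 (Yac Yac' Ybc Ybc' w1 w2 : ℝ) (h1 : 1/2 ≤ w1) (h2 : 1 ≤ w1 + w2)
    (hY1 : Yac - Yac' ≤ Ybc' - Ybc) (hY2 : Ybc' - Ybc ≤ 0) :
    condExp Yac Yac' w1 - condExp Ybc Ybc' w2 ≤
      (Yac - Ybc) * (1/2) + (Yac' - Ybc') * (1 - 1/2) := by
  unfold condExp
  nlinarith [mul_nonneg (by linarith : (0:ℝ) ≤ (Yac' - Yac) - (Ybc - Ybc'))
      (by linarith : (0:ℝ) ≤ w1 - 1/2),
    mul_nonneg (by linarith : (0:ℝ) ≤ Ybc - Ybc') (by linarith : (0:ℝ) ≤ w1 + w2 - 1)]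

lemma key2 (Yac Yac' Ybc Ybc' u1 u2 v1 v2 : ℝ) (hu : 1 ≤ u1 + u2)
    (hs : 2 ≤ u1 + u2 + v1 + v2)
    (hY1 : Yac - Yac' ≤ Ybc' - Ybc) (hY2 : Ybc' - Ybc ≤ 0) :
    (condExp Yac Yac' u1 - condExp Ybc Ybc' v1) * (1/2) +
      (condExp Yac Yac' u2 - condExp Ybc Ybc' v2) * (1 - 1/2) ≤
      (Yac - Ybc) * (1/2) + (Yac' - Ybc') * (1 - 1/2) := by
  unfold condExp
  nlinarith [mul_nonneg (by linarith : (0:ℝ) ≤ (Yac' - Yac) - (Ybc - Ybc'))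
      (by linarith : (0:ℝ) ≤ u1 + u2 - 1),
    mul_nonneg (by linarith : (0:ℝ) ≤ Ybc - Ybc')
      (by linarith : (0:ℝ) ≤ u1 + u2 + v1 + v2 - 2)]

set_option maxHeartbeats 1000000 in
/-- Proxy setup: if p(c) = 1/2, p(d|c) = p(d'|c') ≥ 1/2,
p(a'|c') ≥ p(a|c) ≥ 1/2 and E[Y|a,c] - E[Y|a,c'] ≤ E[Y|a',c'] - E[Y|a',c] ≤ 0,
then RD_crude ≤ RD_true and RD_obs ≤ RD_true. -/
theorem stmt5 (pc pdc pdc' pac pac' Yac Yac' Ybc Ybc' : ℝ)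
    (hpc0 : 0 < pc) (hpc1 : pc < 1)
    (hpdc0 : 0 < pdc) (hpdc1 : pdc < 1) (hpdc'0 : 0 < pdc') (hpdc'1 : pdc' < 1)
    (hpac0 : 0 < pac) (hpac1 : pac < 1) (hpac'0 : 0 < pac') (hpac'1 : pac' < 1)
    (hc : pc = 1/2)
    (hd : pdc = 1 - pdc') (hd2 : 1/2 ≤ pdc)
    (ha1 : pac ≤ 1 - pac') (ha2 : 1/2 ≤ pac)
    (hY1 : Yac - Yac' ≤ Ybc' - Ybc) (hY2 : Ybc' - Ybc ≤ 0) :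
    (condExp Yac Yac' (pcGiven pac pac' 1 1 pc) - condExp Ybc Ybc' (pcGiven (1 - pac) (1 - pac') 1 1 pc)) ≤ ((Yac - Ybc) * pc + (Yac' - Ybc') * (1 - pc)) ∧ ((condExp Yac Yac' (pcGiven pac pac' pdc pdc' pc) - condExp Ybc Ybc' (pcGiven (1 - pac) (1 - pac') pdc pdc' pc)) * (pdc * pc + pdc' * (1 - pc)) + (condExp Yac Yac' (pcGiven pac pac' (1 - pdc) (1 - pdc') pc) - condExp Ybc Ybc' (pcGiven (1 - pac) (1 - pac') (1 - pdc) (1 - pdc') pc)) * (1 - (pdc * pc + pdc' * (1 - pc)))) ≤ ((Yac - Ybc) * pc + (Yac' - Ybc') * (1 - pc)) := by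
  subst hc hd
  set t := pdc' with ht
  have ht2 : t ≤ 1/2 := by linarith
  have hpq : pac' ≤ pac := by linarith
  have hs14 : t * (1 - t) ≤ 1/4 := by nlinarith
  have hs0 : 0 < t * (1 - t) := by nlinarith
  have hpd : (1 - t) * (1/2 : ℝ) + t * (1 - 1/2) = 1/2 := by ring
  constructor
  · apply key1 _ _ _ _ _ _ _ _ hY1 hY2
    · unfold pcGiven
      rw [le_div_iff₀ (by nlinarith [mul_pos hpac0 hpc0, mul_pos hpac'0 hpc0] : (0:ℝ) < pac * 1 * (1/2) + pac' * 1 * (1 - 1/2))]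
      nlinarith
    · unfold pcGiven
      have d1 : (0:ℝ) < pac * 1 * (1/2) + pac' * 1 * (1 - 1/2) := by nlinarith
      have d2 : (0:ℝ) < (1 - pac) * 1 * (1/2) + (1 - pac') * 1 * (1 - 1/2) := by nlinarith
      rw [div_add_div _ _ (ne_of_gt d1) (ne_of_gt d2), le_div_iff₀ (mul_pos d1 d2)]
      nlinarith [mul_nonneg (by linarith : (0:ℝ) ≤ pac - pac')
        (by linarith : (0:ℝ) ≤ 1 - pac - pac')]
  · rw [hpd]
    have h1t : (0:ℝ) < 1 - t := by linarith
    have h1p : (0:ℝ) < 1 - pac := by linarith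
    have h1q : (0:ℝ) < 1 - pac' := by linarith
    have d1 : (0:ℝ) < pac * (1 - t) * (1/2) + pac' * t * (1 - 1/2) := by
      nlinarith [mul_pos hpac0 h1t, mul_pos hpac'0 hpdc'0]
    have d2 : (0:ℝ) < pac * (1 - (1 - t)) * (1/2) + pac' * (1 - t) * (1 - 1/2) := by
      nlinarith [mul_pos hpac0 hpdc'0, mul_pos hpac'0 h1t]
    have e1 : (0:ℝ) < (1 - pac) * (1 - t) * (1/2) + (1 - pac') * t * (1 - 1/2) := by
      nlinarith [mul_pos h1p h1t, mul_pos h1q hpdc'0]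
    have e2 : (0:ℝ) < (1 - pac) * (1 - (1 - t)) * (1/2) + (1 - pac') * (1 - t) * (1 - 1/2) := by
      nlinarith [mul_pos h1p hpdc'0, mul_pos h1q h1t]
    apply key2 _ _ _ _ _ _ _ _ _ _ hY1 hY2
    · unfold pcGiven
      rw [div_add_div _ _ (ne_of_gt d1) (ne_of_gt d2), le_div_iff₀ (mul_pos d1 d2)]
      nlinarith [mul_nonneg (mul_nonneg hs0.le (by linarith : (0:ℝ) ≤ pac - pac'))
        (by linarith : (0:ℝ) ≤ pac + pac')]
    · -- 2 ≤ u1 + u2 + v1 + v2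
      have hP : (0:ℝ) ≤ (t * (1 - t) * (pac - pac')) * ((1 - pac - pac') *
          ((pac + pac') * (2 - (pac + pac')) / 2 + (pac - pac')^2 * (1/2 - 2 * (t * (1 - t))))) := by
        apply mul_nonneg
        · apply mul_nonneg hs0.le; linarith
        · apply mul_nonneg (by linarith)
          have h1 : (0:ℝ) ≤ (pac + pac') * (2 - (pac + pac')) / 2 := by nlinarith
          have h2 : (0:ℝ) ≤ (pac - pac')^2 * (1/2 - 2 * (t * (1 - t))) := by
            apply mul_nonneg (sq_nonneg _); linarith
          linarith
      unfold pcGiven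
      rw [div_add_div _ _ (ne_of_gt d1) (ne_of_gt d2),
        div_add_div _ _ (ne_of_gt (mul_pos d1 d2)) (ne_of_gt e1),
        div_add_div _ _ (ne_of_gt (mul_pos (mul_pos d1 d2) e1)) (ne_of_gt e2),
        le_div_iff₀ (mul_pos (mul_pos (mul_pos d1 d2) e1) e2)]
      nlinarith [hP, mul_pos d1 d2, mul_pos e1 e2]
end

section
/- In the driver setup: if E[Y|A,D] is monotone in D, then E[Y|A,C] is monotone in C. -/
lemma diff_eq (yc yc' pxc pxc' v v' pc : ℝ)
    (hx : 0 < pxc) (hx' : 0 < pxc') (hpc0 : 0 < pc) (hpc1 : pc < 1)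
    (hv0 : 0 < v) (hv1 : v < 1) (hv'0 : 0 < v') (hv'1 : v' < 1) :
    condExp yc yc' (pcGiven pxc pxc' v v' pc)
      - condExp yc yc' (pcGiven pxc pxc' (1 - v) (1 - v') pc)
    = (yc - yc') * (pxc * pxc' * pc * (1 - pc) * (v - v')) /
      ((pxc * v * pc + pxc' * v' * (1 - pc)) *
       (pxc * (1 - v) * pc + pxc' * (1 - v') * (1 - pc))) := by
  have h3 : 0 < 1 - pc := by linarith
  have hD1 : 0 < pxc * v * pc + pxc' * v' * (1 - pc) := by positivity
  have hD2 : 0 < pxc * (1 - v) * pc + pxc' * (1 - v') * (1 - pc) := by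
    have h1 : 0 < 1 - v := by linarith
    have h2 : 0 < 1 - v' := by linarith
    have h3 : 0 < 1 - pc := by linarith
    positivity
  unfold condExp pcGiven
  have hD1' := hD1.ne'
  have hD2' := hD2.ne'
  generalize hE1 : pxc * v * pc + pxc' * v' * (1 - pc) = E1 at hD1'
  generalize hE2 : pxc * (1 - v) * pc + pxc' * (1 - v') * (1 - pc) = E2 at hD2'
  field_simp
  rw [← hE1, ← hE2]
  ring

lemma sign_ge (yc yc' pxc pxc' v v' pc : ℝ)
    (hx : 0 < pxc) (hx' : 0 < pxc') (hpc0 : 0 < pc) (hpc1 : pc < 1)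
    (hv0 : 0 < v) (hv1 : v < 1) (hv'0 : 0 < v') (hv'1 : v' < 1)
    (hvv : v' < v)
    (hd : condExp yc yc' (pcGiven pxc pxc' v v' pc)
      ≥ condExp yc yc' (pcGiven pxc pxc' (1 - v) (1 - v') pc)) :
    yc' ≤ yc := by
  have he := diff_eq yc yc' pxc pxc' v v' pc hx hx' hpc0 hpc1 hv0 hv1 hv'0 hv'1
  have h3 : 0 < 1 - pc := by linarith
  have hD1 : 0 < pxc * v * pc + pxc' * v' * (1 - pc) := by positivity
  have hD2 : 0 < pxc * (1 - v) * pc + pxc' * (1 - v') * (1 - pc) := by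
    have h1 : 0 < 1 - v := by linarith
    have h2 : 0 < 1 - v' := by linarith
    have h3 : 0 < 1 - pc := by linarith
    positivity
  have hden : 0 < (pxc * v * pc + pxc' * v' * (1 - pc)) *
      (pxc * (1 - v) * pc + pxc' * (1 - v') * (1 - pc)) := mul_pos hD1 hD2
  have hnn : 0 ≤ condExp yc yc' (pcGiven pxc pxc' v v' pc)
      - condExp yc yc' (pcGiven pxc pxc' (1 - v) (1 - v') pc) := by linarith
  rw [he] at hnn
  have hnum : 0 ≤ (yc - yc') * (pxc * pxc' * pc * (1 - pc) * (v - v')) := by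
    have h3 := mul_nonneg hnn hden.le
    rwa [div_mul_cancel₀ _ hden.ne'] at h3
  have hK : 0 < pxc * pxc' * pc * (1 - pc) * (v - v') := by
    have h3 : 0 < 1 - pc := by linarith
    have h4 : 0 < v - v' := by linarith
    positivity
  nlinarith

lemma sign_le (yc yc' pxc pxc' v v' pc : ℝ)
    (hx : 0 < pxc) (hx' : 0 < pxc') (hpc0 : 0 < pc) (hpc1 : pc < 1)
    (hv0 : 0 < v) (hv1 : v < 1) (hv'0 : 0 < v') (hv'1 : v' < 1)
    (hvv : v' < v)
    (hd : condExp yc yc' (pcGiven pxc pxc' v v' pc)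
      ≤ condExp yc yc' (pcGiven pxc pxc' (1 - v) (1 - v') pc)) :
    yc ≤ yc' := by
  have := sign_ge yc' yc pxc pxc' v v' pc hx hx' hpc0 hpc1 hv0 hv1 hv'0 hv'1 hvv ?_
  · exact this
  · unfold condExp at hd ⊢
    linarith

lemma sign_ge' (yc yc' pxc pxc' v v' pc : ℝ)
    (hx : 0 < pxc) (hx' : 0 < pxc') (hpc0 : 0 < pc) (hpc1 : pc < 1)
    (hv0 : 0 < v) (hv1 : v < 1) (hv'0 : 0 < v') (hv'1 : v' < 1)
    (hvv : v < v')
    (hd : condExp yc yc' (pcGiven pxc pxc' v v' pc)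
      ≥ condExp yc yc' (pcGiven pxc pxc' (1 - v) (1 - v') pc)) :
    yc ≤ yc' := by
  refine sign_le yc yc' pxc pxc' (1 - v) (1 - v') pc hx hx' hpc0 hpc1
    (by linarith) (by linarith) (by linarith) (by linarith) (by linarith) ?_
  have e1 : 1 - (1 - v) = v := by ring
  have e2 : 1 - (1 - v') = v' := by ring
  rw [e1, e2]
  exact hd

lemma sign_le' (yc yc' pxc pxc' v v' pc : ℝ)
    (hx : 0 < pxc) (hx' : 0 < pxc') (hpc0 : 0 < pc) (hpc1 : pc < 1)
    (hv0 : 0 < v) (hv1 : v < 1) (hv'0 : 0 < v') (hv'1 : v' < 1)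
    (hvv : v < v')
    (hd : condExp yc yc' (pcGiven pxc pxc' v v' pc)
      ≤ condExp yc yc' (pcGiven pxc pxc' (1 - v) (1 - v') pc)) :
    yc' ≤ yc := by
  refine sign_ge yc yc' pxc pxc' (1 - v) (1 - v') pc hx hx' hpc0 hpc1
    (by linarith) (by linarith) (by linarith) (by linarith) (by linarith) ?_
  have e1 : 1 - (1 - v) = v := by ring
  have e2 : 1 - (1 - v') = v' := by ring
  rw [e1, e2]
  exact hd

/-- Driver setup: if E[Y|A,D] is monotone in D, then E[Y|A,C] is monotone in C. -/
theorem stmt6 (pd pcd pcd' pac pac' Yac Yac' Ybc Ybc' : ℝ)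
    (hpd0 : 0 < pd) (hpd1 : pd < 1)
    (hpcd0 : 0 < pcd) (hpcd1 : pcd < 1) (hpcd'0 : 0 < pcd') (hpcd'1 : pcd' < 1)
    (hpac0 : 0 < pac) (hpac1 : pac < 1) (hpac'0 : 0 < pac') (hpac'1 : pac' < 1)
    (hne : pcd ≠ pcd')
    (hmonoD : (condExp Yac Yac' (pcGiven pac pac' (pcd * pd / (pcd * pd + pcd' * (1 - pd))) ((1 - pcd) * pd / (1 - (pcd * pd + pcd' * (1 - pd)))) (pcd * pd + pcd' * (1 - pd))) ≥ condExp Yac Yac' (pcGiven pac pac' (1 - (pcd * pd / (pcd * pd + pcd' * (1 - pd)))) (1 - ((1 - pcd) * pd / (1 - (pcd * pd + pcd' * (1 - pd))))) (pcd * pd + pcd' * (1 - pd))) ∧ condExp Ybc Ybc' (pcGiven (1 - pac) (1 - pac') (pcd * pd / (pcd * pd + pcd' * (1 - pd))) ((1 - pcd) * pd / (1 - (pcd * pd + pcd' * (1 - pd)))) (pcd * pd + pcd' * (1 - pd))) ≥ condExp Ybc Ybc' (pcGiven (1 - pac) (1 - pac') (1 - (pcd * pd / (pcd * pd + pcd'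 * (1 - pd)))) (1 - ((1 - pcd) * pd / (1 - (pcd * pd + pcd' * (1 - pd))))) (pcd * pd + pcd' * (1 - pd)))) ∨ (condExp Yac Yac' (pcGiven pac pac' (pcd * pd / (pcd * pd + pcd' * (1 - pd))) ((1 - pcd) * pd / (1 - (pcd * pd + pcd' * (1 - pd)))) (pcd * pd + pcd' * (1 - pd))) ≤ condExp Yac Yac' (pcGiven pac pac' (1 - (pcd * pd / (pcd * pd + pcd' * (1 - pd)))) (1 - ((1 - pcd) * pd / (1 - (pcd * pd + pcd' * (1 - pd))))) (pcd * pd + pcd' * (1 - pd))) ∧ condExp Ybc Ybc' (pcGiven (1 - pac) (1 - pac') (pcd * pd / (pcd * pd + pcd' * (1 - pd))) ((1 - pcd) * pd / (1 - (pcd * pd + pcd' * (1 - pd)))) (pcd * pd + pcd' * (1 - pd))) ≤ condExp Ybc Ybc' (pcGiven (1 - pac) (1 - pac') (1 - (pcd * pd / (pcd * pd + pcd' * (1 - pd)))) (1 - ((1 - pcd) * pd / (1 - (pcd * pd + pcd' * (1 - pd))))) (pcd * pd + pcd' * (1 - pd))))) :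
    (Yac ≥ Yac' ∧ Ybc ≥ Ybc') ∨ (Yac ≤ Yac' ∧ Ybc ≤ Ybc') := by
  have hpd1' : 0 < 1 - pd := by linarith
  have hpc0 : 0 < pcd * pd + pcd' * (1 - pd) := by positivity
  have hpc1 : pcd * pd + pcd' * (1 - pd) < 1 := by nlinarith
  set pc := pcd * pd + pcd' * (1 - pd) with hpc
  set v := pcd * pd / pc with hv
  set v' := (1 - pcd) * pd / (1 - pc) with hv'
  have h1pc : 0 < 1 - pc := by linarith
  have hv0 : 0 < v := div_pos (by positivity) hpc0
  have hv1 : v < 1 := by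
    rw [hv, div_lt_one hpc0]
    nlinarith
  have hv'0 : 0 < v' := div_pos (by nlinarith) h1pc
  have hv'1 : v' < 1 := by
    rw [hv', div_lt_one h1pc]
    nlinarith
  have hb0 : 0 < 1 - pac := by linarith
  have hb'0 : 0 < 1 - pac' := by linarith
  rcases hne.lt_or_gt with h | h
  · -- pcd < pcd', so v < v'
    have hvv : v < v' := by
      rw [hv, hv', div_lt_div_iff₀ hpc0 h1pc]
      nlinarith [mul_pos (mul_pos hpd0 hpd1') (sub_pos.mpr h)]
    rcases hmonoD with ⟨h1, h2⟩ | ⟨h1, h2⟩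
    · exact Or.inr ⟨sign_ge' Yac Yac' pac pac' v v' pc hpac0 hpac'0 hpc0 (by linarith)
        hv0 hv1 hv'0 hv'1 hvv h1,
        sign_ge' Ybc Ybc' (1 - pac) (1 - pac') v v' pc hb0 hb'0 hpc0 (by linarith)
        hv0 hv1 hv'0 hv'1 hvv h2⟩
    · exact Or.inl ⟨sign_le' Yac Yac' pac pac' v v' pc hpac0 hpac'0 hpc0 (by linarith)
        hv0 hv1 hv'0 hv'1 hvv h1,
        sign_le' Ybc Ybc' (1 - pac) (1 - pac') v v' pc hb0 hb'0 hpc0 (by linarith)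
        hv0 hv1 hv'0 hv'1 hvv h2⟩
  · -- pcd' < pcd, so v' < v
    have hvv : v' < v := by
      rw [hv, hv', div_lt_div_iff₀ h1pc hpc0]
      nlinarith [mul_pos (mul_pos hpd0 hpd1') (sub_pos.mpr h)]
    rcases hmonoD with ⟨h1, h2⟩ | ⟨h1, h2⟩
    · exact Or.inl ⟨sign_ge Yac Yac' pac pac' v v' pc hpac0 hpac'0 hpc0 (by linarith)
        hv0 hv1 hv'0 hv'1 hvv h1,
        sign_ge Ybc Ybc' (1 - pac) (1 - pac') v v' pc hb0 hb'0 hpc0 (by linarith)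
        hv0 hv1 hv'0 hv'1 hvv h2⟩
    · exact Or.inr ⟨sign_le Yac Yac' pac pac' v v' pc hpac0 hpac'0 hpc0 (by linarith)
        hv0 hv1 hv'0 hv'1 hvv h1,
        sign_le Ybc Ybc' (1 - pac) (1 - pac') v v' pc hb0 hb'0 hpc0 (by linarith)
        hv0 hv1 hv'0 hv'1 hvv h2⟩
end

section
/- In the driver setup: if E[Y|A,D] is monotone in D, then RD_obs lies between RD_true and RD_crude, i.e. min(RD_true, RD_crude) ≤ RD_obs ≤ max(RD_true, RD_crude). -/
noncomputable def Wb (g g' s : ℝ) : ℝ := g * s / (g * s + g' * (1 - s))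

lemma between (T X O : ℝ) (h : 0 ≤ (X - O) * (O - T)) : min T X ≤ O ∧ O ≤ max T X := by
  constructor
  · rcases lt_or_ge O T with h' | h'
    · have hx : X ≤ O := by nlinarith
      exact le_trans (min_le_right _ _) hx
    · exact le_trans (min_le_left _ _) h'
  · rcases lt_or_ge T O with h' | h'
    · have hx : O ≤ X := by nlinarith
      exact le_trans hx (le_max_right _ _)
    · exact le_trans h' (le_max_left _ _)

lemma W_eq1 (g g' pd pcd pcd' : ℝ) (hg : 0 < g) (hg' : 0 < g')
    (hpd0 : 0 < pd) (hpd1 : pd < 1) (h1 : 0 < pcd) (h2 : pcd < 1)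
    (h3 : 0 < pcd') (h4 : pcd' < 1) :
    pcGiven g g' (pcd * pd / (pcd * pd + pcd' * (1 - pd)))
      ((1 - pcd) * pd / (1 - (pcd * pd + pcd' * (1 - pd))))
      (pcd * pd + pcd' * (1 - pd)) = Wb g g' pcd := by
  have hρ0 : 0 < pcd * pd + pcd' * (1 - pd) := by nlinarith
  have hρ1 : pcd * pd + pcd' * (1 - pd) < 1 := by nlinarith
  have hρ1' : (1 : ℝ) - (pcd * pd + pcd' * (1 - pd)) ≠ 0 := by linarith [hρ1]
  have hd1 : 0 < g * pcd + g' * (1 - pcd) := by nlinarith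
  have hd2 : 0 < g * (pcd * pd) + g' * ((1 - pcd) * pd) := by nlinarith
  have e1 : g * (pcd * pd / (pcd * pd + pcd' * (1 - pd))) * (pcd * pd + pcd' * (1 - pd))
      = g * (pcd * pd) := by field_simp
  have e2 : g' * ((1 - pcd) * pd / (1 - (pcd * pd + pcd' * (1 - pd)))) * (1 - (pcd * pd + pcd' * (1 - pd)))
      = g' * ((1 - pcd) * pd) := by field_simp
  rw [pcGiven, Wb, e1, e2, div_eq_div_iff hd2.ne' hd1.ne']
  ring

lemma W_eq2 (g g' pd pcd pcd' : ℝ) (hg : 0 < g) (hg' : 0 < g')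
    (hpd0 : 0 < pd) (hpd1 : pd < 1) (h1 : 0 < pcd) (h2 : pcd < 1)
    (h3 : 0 < pcd') (h4 : pcd' < 1) :
    pcGiven g g' (1 - pcd * pd / (pcd * pd + pcd' * (1 - pd)))
      (1 - (1 - pcd) * pd / (1 - (pcd * pd + pcd' * (1 - pd))))
      (pcd * pd + pcd' * (1 - pd)) = Wb g g' pcd' := by
  have hρ0 : 0 < pcd * pd + pcd' * (1 - pd) := by nlinarith
  have hρ1 : pcd * pd + pcd' * (1 - pd) < 1 := by nlinarith
  have hρ1' : (1 : ℝ) - (pcd * pd + pcd' * (1 - pd)) ≠ 0 := by linarith [hρ1]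
  have hd1 : 0 < g * pcd' + g' * (1 - pcd') := by nlinarith
  have hd2 : 0 < g * (pcd' * (1 - pd)) + g' * ((1 - pcd') * (1 - pd)) := by nlinarith
  have e1 : g * (1 - pcd * pd / (pcd * pd + pcd' * (1 - pd))) * (pcd * pd + pcd' * (1 - pd))
      = g * (pcd' * (1 - pd)) := by field_simp; ring
  have e2 : g' * (1 - (1 - pcd) * pd / (1 - (pcd * pd + pcd' * (1 - pd)))) * (1 - (pcd * pd + pcd' * (1 - pd)))
      = g' * ((1 - pcd') * (1 - pd)) := by field_simp; ring
  rw [pcGiven, Wb, e1, e2, div_eq_div_iff hd2.ne' hd1.ne']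
  ring

lemma W_eq3 (g g' s : ℝ) : pcGiven g g' 1 1 s = Wb g g' s := by
  simp [pcGiven, Wb]

lemma keyA (g g' pcd pcd' pd : ℝ) (hg : 0 < g) (hg' : 0 < g')
    (hpd0 : 0 < pd) (hpd1 : pd < 1) (h1 : 0 < pcd) (h2 : pcd < 1)
    (h3 : 0 < pcd') (h4 : pcd' < 1) :
    ∃ K, 0 ≤ K ∧
      Wb g g' (pcd * pd + pcd' * (1 - pd)) - (Wb g g' pcd * pd + Wb g g' pcd' * (1 - pd))
        = (g - g') * K := by
  have hρ0 : 0 < pcd * pd + pcd' * (1 - pd) := by nlinarith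
  have hρ1 : pcd * pd + pcd' * (1 - pd) < 1 := by nlinarith
  have hE1 : 0 < g * pcd + g' * (1 - pcd) := by nlinarith
  have hE2 : 0 < g * pcd' + g' * (1 - pcd') := by nlinarith
  have hE3 : 0 < g * (pcd * pd + pcd' * (1 - pd)) + g' * (1 - (pcd * pd + pcd' * (1 - pd))) := by nlinarith
  refine ⟨g * g' * pd * (1 - pd) * (pcd - pcd') ^ 2 /
    ((g * pcd + g' * (1 - pcd)) * (g * pcd' + g' * (1 - pcd')) *
      (g * (pcd * pd + pcd' * (1 - pd)) + g' * (1 - (pcd * pd + pcd' * (1 - pd))))), ?_, ?_⟩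
  · apply div_nonneg
    · exact mul_nonneg (mul_nonneg (mul_nonneg (mul_nonneg hg.le hg'.le) hpd0.le)
        (by linarith : (0:ℝ) ≤ 1 - pd)) (sq_nonneg _)
    · exact (mul_pos (mul_pos hE1 hE2) hE3).le
  · rw [Wb, Wb, Wb]
    field_simp
    ring

lemma keyB (g g' pcd pcd' pd : ℝ) (hg : 0 < g) (hg' : 0 < g')
    (hpd0 : 0 < pd) (hpd1 : pd < 1) (h1 : 0 < pcd) (h2 : pcd < 1)
    (h3 : 0 < pcd') (h4 : pcd' < 1) :
    ∃ L, 0 ≤ L ∧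
      (Wb g g' pcd * pd + Wb g g' pcd' * (1 - pd)) - (pcd * pd + pcd' * (1 - pd))
        = (g - g') * L := by
  have hE1 : 0 < g * pcd + g' * (1 - pcd) := by nlinarith
  have hE2 : 0 < g * pcd' + g' * (1 - pcd') := by nlinarith
  refine ⟨(pd * (pcd * (1 - pcd)) * (g * pcd' + g' * (1 - pcd'))
      + (1 - pd) * (pcd' * (1 - pcd')) * (g * pcd + g' * (1 - pcd))) /
      ((g * pcd + g' * (1 - pcd)) * (g * pcd' + g' * (1 - pcd'))), ?_, ?_⟩
  · apply div_nonneg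
    · have ha : 0 ≤ pd * (pcd * (1 - pcd)) * (g * pcd' + g' * (1 - pcd')) :=
        mul_nonneg (mul_nonneg hpd0.le (mul_nonneg h1.le (by linarith))) hE2.le
      have hb : 0 ≤ (1 - pd) * (pcd' * (1 - pcd')) * (g * pcd + g' * (1 - pcd)) :=
        mul_nonneg (mul_nonneg (by linarith) (mul_nonneg h3.le (by linarith))) hE1.le
      linarith
    · exact (mul_pos hE1 hE2).le
  · rw [Wb, Wb]
    field_simp
    ring

lemma keyC (g g' pcd pcd' : ℝ) (hg : 0 < g) (hg' : 0 < g')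
    (h1 : 0 < pcd) (h2 : pcd < 1) (h3 : 0 < pcd') (h4 : pcd' < 1) :
    ∃ M, 0 < M ∧ Wb g g' pcd - Wb g g' pcd' = (pcd - pcd') * M := by
  have hE1 : 0 < g * pcd + g' * (1 - pcd) := by nlinarith
  have hE2 : 0 < g * pcd' + g' * (1 - pcd') := by nlinarith
  refine ⟨g * g' / ((g * pcd + g' * (1 - pcd)) * (g * pcd' + g' * (1 - pcd'))), ?_, ?_⟩
  · exact div_pos (mul_pos hg hg') (mul_pos hE1 hE2)
  · rw [Wb, Wb]
    field_simp
    ring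

set_option maxHeartbeats 1000000 in
/-- Driver setup: if E[Y|A,D] is monotone in D, then RD_obs lies between
RD_true and RD_crude. -/
theorem stmt7 (pd pcd pcd' pac pac' Yac Yac' Ybc Ybc' : ℝ)
    (hpd0 : 0 < pd) (hpd1 : pd < 1)
    (hpcd0 : 0 < pcd) (hpcd1 : pcd < 1) (hpcd'0 : 0 < pcd') (hpcd'1 : pcd' < 1)
    (hpac0 : 0 < pac) (hpac1 : pac < 1) (hpac'0 : 0 < pac') (hpac'1 : pac' < 1)
    (hne : pcd ≠ pcd')
    (hmonoD : (condExp Yac Yac' (pcGiven pac pac' (pcd * pd / (pcd * pd + pcd' * (1 - pd))) ((1 - pcd) * pd / (1 - (pcd * pd + pcd' * (1 - pd)))) (pcd * pd + pcd' * (1 - pd))) ≥ condExp Yac Yac' (pcGiven pac pac' (1 - (pcd * pd / (pcd * pd + pcd' * (1 - pd)))) (1 - ((1 - pcd) * pd / (1 - (pcd * pd + pcd' * (1 - pd))))) (pcd * pd + pcd' * (1 - pd))) ∧ condExp Ybc Ybc' (pcGiven (1 - pac) (1 - pac') (pcd * pd / (pcd * pd + pcd' * (1 - pd))) ((1 - pcd)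 * pd / (1 - (pcd * pd + pcd' * (1 - pd)))) (pcd * pd + pcd' * (1 - pd))) ≥ condExp Ybc Ybc' (pcGiven (1 - pac) (1 - pac') (1 - (pcd * pd / (pcd * pd + pcd' * (1 - pd)))) (1 - ((1 - pcd) * pd / (1 - (pcd * pd + pcd' * (1 - pd))))) (pcd * pd + pcd' * (1 - pd)))) ∨ (condExp Yac Yac' (pcGiven pac pac' (pcd * pd / (pcd * pd + pcd' * (1 - pd))) ((1 - pcd) * pd / (1 - (pcd * pd + pcd' * (1 - pd)))) (pcd * pd + pcd' * (1 - pd))) ≤ condExp Yac Yac' (pcGiven pac pac' (1 - (pcd * pd / (pcd * pd + pcd' * (1 - pd)))) (1 - ((1 - pcd) * pd / (1 - (pcd * pd + pcd' * (1 - pd))))) (pcd * pd + pcd' * (1 - pd))) ∧ condExp Ybc Ybc' (pcGiven (1 - pac) (1 - pac') (pcd * pd / (pcd * pd + pcd' * (1 - pd))) ((1 - pcd) * pd / (1 - (pcd * pd + pcd' * (1 - pd)))) (pcd * pd + pcd' * (1 - pd))) ≤ condExp Ybc Ybc' (pcGiven (1 - pac) (1 - pac') (1 - (pcd * pd / (pcd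 * pd + pcd' * (1 - pd)))) (1 - ((1 - pcd) * pd / (1 - (pcd * pd + pcd' * (1 - pd))))) (pcd * pd + pcd' * (1 - pd))))) :
    min ((Yac - Ybc) * (pcd * pd + pcd' * (1 - pd)) + (Yac' - Ybc') * (1 - (pcd * pd + pcd' * (1 - pd)))) (condExp Yac Yac' (pcGiven pac pac' 1 1 (pcd * pd + pcd' * (1 - pd))) - condExp Ybc Ybc' (pcGiven (1 - pac) (1 - pac') 1 1 (pcd * pd + pcd' * (1 - pd)))) ≤ ((condExp Yac Yac' (pcGiven pac pac' (pcd * pd / (pcd * pd + pcd' * (1 - pd))) ((1 - pcd) * pd / (1 - (pcd * pd + pcd' * (1 - pd)))) (pcd * pd + pcd' * (1 - pd))) - condExp Ybc Ybc' (pcGiven (1 - pac) (1 - pac') (pcd * pd / (pcd * pd + pcd' * (1 - pd))) ((1 - pcd) * pd / (1 - (pcd * pd + pcd' * (1 - pd)))) (pcd * pd + pcd' * (1 - pd)))) * pd + (condExp Yac Yac' (pcGiven pac pac' (1 - (pcd * pd / (pcd * pd + pcd' * (1 - pd)))) (1 - ((1 - pcd) * pd / (1 - (pcd * pd + pcd'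 * (1 - pd))))) (pcd * pd + pcd' * (1 - pd))) - condExp Ybc Ybc' (pcGiven (1 - pac) (1 - pac') (1 - (pcd * pd / (pcd * pd + pcd' * (1 - pd)))) (1 - ((1 - pcd) * pd / (1 - (pcd * pd + pcd' * (1 - pd))))) (pcd * pd + pcd' * (1 - pd)))) * (1 - pd)) ∧
    ((condExp Yac Yac' (pcGiven pac pac' (pcd * pd / (pcd * pd + pcd' * (1 - pd))) ((1 - pcd) * pd / (1 - (pcd * pd + pcd' * (1 - pd)))) (pcd * pd + pcd' * (1 - pd))) - condExp Ybc Ybc' (pcGiven (1 - pac) (1 - pac') (pcd * pd / (pcd * pd + pcd' * (1 - pd))) ((1 - pcd) * pd / (1 - (pcd * pd + pcd' * (1 - pd)))) (pcd * pd + pcd' * (1 - pd)))) * pd + (condExp Yac Yac' (pcGiven pac pac' (1 - (pcd * pd / (pcd * pd + pcd' * (1 - pd)))) (1 - ((1 - pcd) * pd / (1 - (pcd * pd + pcd' * (1 - pd))))) (pcd * pd + pcd' * (1 - pd))) - condExp Ybc Ybc' (pcGiven (1 - pac) (1 - pac') (1 - (pcd * pd / (pcd * pd + pcd' * (1 - pd))))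 (1 - ((1 - pcd) * pd / (1 - (pcd * pd + pcd' * (1 - pd))))) (pcd * pd + pcd' * (1 - pd)))) * (1 - pd)) ≤ max ((Yac - Ybc) * (pcd * pd + pcd' * (1 - pd)) + (Yac' - Ybc') * (1 - (pcd * pd + pcd' * (1 - pd)))) (condExp Yac Yac' (pcGiven pac pac' 1 1 (pcd * pd + pcd' * (1 - pd))) - condExp Ybc Ybc' (pcGiven (1 - pac) (1 - pac') 1 1 (pcd * pd + pcd' * (1 - pd))))  := by
  have hga : 0 < 1 - pac := by linarith
  have hgb : 0 < 1 - pac' := by linarith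
  rw [W_eq1 pac pac' pd pcd pcd' hpac0 hpac'0 hpd0 hpd1 hpcd0 hpcd1 hpcd'0 hpcd'1,
      W_eq1 (1 - pac) (1 - pac') pd pcd pcd' hga hgb hpd0 hpd1 hpcd0 hpcd1 hpcd'0 hpcd'1,
      W_eq2 pac pac' pd pcd pcd' hpac0 hpac'0 hpd0 hpd1 hpcd0 hpcd1 hpcd'0 hpcd'1,
      W_eq2 (1 - pac) (1 - pac') pd pcd pcd' hga hgb hpd0 hpd1 hpcd0 hpcd1 hpcd'0 hpcd'1] at hmonoD ⊢
  rw [W_eq3, W_eq3]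
  obtain ⟨Ka, hKa, eKa⟩ := keyA pac pac' pcd pcd' pd hpac0 hpac'0 hpd0 hpd1 hpcd0 hpcd1 hpcd'0 hpcd'1
  obtain ⟨Kb, hKb, eKb⟩ := keyA (1 - pac) (1 - pac') pcd pcd' pd hga hgb hpd0 hpd1 hpcd0 hpcd1 hpcd'0 hpcd'1
  obtain ⟨La, hLa, eLa⟩ := keyB pac pac' pcd pcd' pd hpac0 hpac'0 hpd0 hpd1 hpcd0 hpcd1 hpcd'0 hpcd'1
  obtain ⟨Lb, hLb, eLb⟩ := keyB (1 - pac) (1 - pac') pcd pcd' pd hga hgb hpd0 hpd1 hpcd0 hpcd1 hpcd'0 hpcd'1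
  obtain ⟨Ma, hMa, eMa⟩ := keyC pac pac' pcd pcd' hpac0 hpac'0 hpcd0 hpcd1 hpcd'0 hpcd'1
  obtain ⟨Mb, hMb, eMb⟩ := keyC (1 - pac) (1 - pac') pcd pcd' hga hgb hpcd0 hpcd1 hpcd'0 hpcd'1
  have hs : pcd - pcd' ≠ 0 := sub_ne_zero.mpr hne
  have hs2 : 0 < (pcd - pcd') ^ 2 := lt_of_le_of_ne (sq_nonneg _) (Ne.symm (pow_ne_zero 2 hs))
  -- monotonicity gives same-sign treatment effects
  have hdA : condExp Yac Yac' (Wb pac pac' pcd) - condExp Yac Yac' (Wb pac pac' pcd')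
      = (Yac - Yac') * (pcd - pcd') * Ma := by
    simp only [condExp]; linear_combination (Yac - Yac') * eMa
  have hdB : condExp Ybc Ybc' (Wb (1 - pac) (1 - pac') pcd) - condExp Ybc Ybc' (Wb (1 - pac) (1 - pac') pcd')
      = (Ybc - Ybc') * (pcd - pcd') * Mb := by
    simp only [condExp]; linear_combination (Ybc - Ybc') * eMb
  have hab : 0 ≤ (Yac - Yac') * (Ybc - Ybc') := by
    have hring : (Yac - Yac') * (pcd - pcd') * ((Ybc - Ybc') * (pcd - pcd'))
        = (Yac - Yac') * (Ybc - Ybc') * (pcd - pcd') ^ 2 := by ring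
    have hstep : 0 ≤ (Yac - Yac') * (Ybc - Ybc') * (pcd - pcd') ^ 2 := by
      rcases hmonoD with ⟨ha, hb⟩ | ⟨ha, hb⟩
      · have ha3 : 0 * Ma ≤ (Yac - Yac') * (pcd - pcd') * Ma := by linarith [ha, hdA]
        have hb3 : 0 * Mb ≤ (Ybc - Ybc') * (pcd - pcd') * Mb := by linarith [hb, hdB]
        have ha2 := le_of_mul_le_mul_right ha3 hMa
        have hb2 := le_of_mul_le_mul_right hb3 hMb
        have := mul_nonneg ha2 hb2
        linarith [this, hring]
      · have ha3 : (Yac - Yac') * (pcd - pcd') * Ma ≤ 0 * Ma := by linarith [ha, hdA]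
        have hb3 : (Ybc - Ybc') * (pcd - pcd') * Mb ≤ 0 * Mb := by linarith [hb, hdB]
        have ha2 := le_of_mul_le_mul_right ha3 hMa
        have hb2 := le_of_mul_le_mul_right hb3 hMb
        have := mul_nonneg (neg_nonneg.mpr ha2) (neg_nonneg.mpr hb2)
        have hring2 : -((Yac - Yac') * (pcd - pcd')) * -((Ybc - Ybc') * (pcd - pcd'))
            = (Yac - Yac') * (Ybc - Ybc') * (pcd - pcd') ^ 2 := by ring
        linarith [this, hring2]
    have h0 : 0 * (pcd - pcd') ^ 2 ≤ (Yac - Yac') * (Ybc - Ybc') * (pcd - pcd') ^ 2 := by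
      linarith [hstep]
    exact le_of_mul_le_mul_right h0 hs2
  refine between _ _ _ ?_
  have key : 0 ≤ ((Yac - Yac') * Ka + (Ybc - Ybc') * Kb) *
      ((Yac - Yac') * La + (Ybc - Ybc') * Lb) := by
    have t1 := mul_nonneg (mul_nonneg hKa hLa) (sq_nonneg (Yac - Yac'))
    have t2 := mul_nonneg (mul_nonneg hKb hLb) (sq_nonneg (Ybc - Ybc'))
    have t3 := mul_nonneg (mul_nonneg hab hKa) hLb
    have t4 := mul_nonneg (mul_nonneg hab hKb) hLa
    nlinarith [t1, t2, t3, t4]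
  have hfinal : (condExp Yac Yac' (Wb pac pac' (pcd * pd + pcd' * (1 - pd))) -
        condExp Ybc Ybc' (Wb (1 - pac) (1 - pac') (pcd * pd + pcd' * (1 - pd))) -
        ((condExp Yac Yac' (Wb pac pac' pcd) - condExp Ybc Ybc' (Wb (1 - pac) (1 - pac') pcd)) * pd +
          (condExp Yac Yac' (Wb pac pac' pcd') - condExp Ybc Ybc' (Wb (1 - pac) (1 - pac') pcd')) * (1 - pd))) *
      ((condExp Yac Yac' (Wb pac pac' pcd) - condExp Ybc Ybc' (Wb (1 - pac) (1 - pac') pcd)) * pd +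
          (condExp Yac Yac' (Wb pac pac' pcd') - condExp Ybc Ybc' (Wb (1 - pac) (1 - pac') pcd')) * (1 - pd) -
        ((Yac - Ybc) * (pcd * pd + pcd' * (1 - pd)) + (Yac' - Ybc') * (1 - (pcd * pd + pcd' * (1 - pd)))))
      = (pac - pac') ^ 2 * (((Yac - Yac') * Ka + (Ybc - Ybc') * Kb) *
          ((Yac - Yac') * La + (Ybc - Ybc') * Lb)) := by
    have h1 : condExp Yac Yac' (Wb pac pac' (pcd * pd + pcd' * (1 - pd))) -
        condExp Ybc Ybc' (Wb (1 - pac) (1 - pac') (pcd * pd + pcd' * (1 - pd))) -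
        ((condExp Yac Yac' (Wb pac pac' pcd) - condExp Ybc Ybc' (Wb (1 - pac) (1 - pac') pcd)) * pd +
          (condExp Yac Yac' (Wb pac pac' pcd') - condExp Ybc Ybc' (Wb (1 - pac) (1 - pac') pcd')) * (1 - pd))
        = (pac - pac') * ((Yac - Yac') * Ka + (Ybc - Ybc') * Kb) := by
      simp only [condExp]
      linear_combination (Yac - Yac') * eKa - (Ybc - Ybc') * eKb
    have h2 : (condExp Yac Yac' (Wb pac pac' pcd) - condExp Ybc Ybc' (Wb (1 - pac) (1 - pac') pcd)) * pd +
          (condExp Yac Yac' (Wb pac pac' pcd') - condExp Ybc Ybc' (Wb (1 - pac) (1 - pac') pcd')) * (1 - pd) -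
        ((Yac - Ybc) * (pcd * pd + pcd' * (1 - pd)) + (Yac' - Ybc') * (1 - (pcd * pd + pcd' * (1 - pd))))
        = (pac - pac') * ((Yac - Yac') * La + (Ybc - Ybc') * Lb) := by
      simp only [condExp]
      linear_combination (Yac - Yac') * eLa - (Ybc - Ybc') * eLb
    rw [h1, h2]; ring
  rw [hfinal]
  exact mul_nonneg (sq_nonneg _) key
end

section
/- In the driver setup: if E[Y|A,D] and E[A|D] are both nondecreasing in D or both nonincreasing in D, then E[Y|A,C] and E[A|C] are both nondecreasing in C or both nonincreasing in C; and if one of E[Y|A,D], E[A|D] is nondecreasing in D and the other is nonincreasing in D, then one of E[Y|A,C], E[A|C] is nondecreasing in C and the other is nonincreasing in C. -/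
lemma pcGiven_lt (pxc pxc' w1 w2 u1 u2 pc : ℝ) (hx : 0 < pxc) (hx' : 0 < pxc')
    (hc : 0 < pc) (hc1 : pc < 1) (hw1 : 0 < w1) (hw2 : 0 < w2) (hu1 : 0 < u1) (hu2 : 0 < u2)
    (h : w1 * u2 < u1 * w2) :
    pcGiven pxc pxc' w1 w2 pc < pcGiven pxc pxc' u1 u2 pc := by
  have h1pc : 0 < 1 - pc := by linarith
  unfold pcGiven
  have d1 : 0 < pxc * w1 * pc + pxc' * w2 * (1 - pc) := by positivity
  have d2 : 0 < pxc * u1 * pc + pxc' * u2 * (1 - pc) := by positivity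
  rw [div_lt_div_iff₀ d1 d2]
  nlinarith [mul_lt_mul_of_pos_left h (by positivity : (0:ℝ) < pxc * pxc' * (pc * (1 - pc)))]

lemma condExp_le_iff (yc yc' w w' : ℝ) (h : w' < w) :
    condExp yc yc' w' ≤ condExp yc yc' w ↔ yc' ≤ yc := by
  unfold condExp
  constructor <;> intro h1 <;> nlinarith

lemma condExp_le_iff' (yc yc' w w' : ℝ) (h : w' < w) :
    condExp yc yc' w ≤ condExp yc yc' w' ↔ yc ≤ yc' := by
  unfold condExp
  constructor <;> intro h1 <;> nlinarith

set_option maxHeartbeats 1000000 in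
/-- Driver setup: if E[Y|A,D] and E[A|D] are both nondecreasing or both
nonincreasing in D, then E[Y|A,C] and E[A|C] are both nondecreasing or both
nonincreasing in C; if one is nondecreasing and the other nonincreasing in D,
then likewise in C. -/
theorem stmt8 (pd pcd pcd' pac pac' Yac Yac' Ybc Ybc' : ℝ)
    (hpd0 : 0 < pd) (hpd1 : pd < 1)
    (hpcd0 : 0 < pcd) (hpcd1 : pcd < 1) (hpcd'0 : 0 < pcd') (hpcd'1 : pcd' < 1)
    (hpac0 : 0 < pac) (hpac1 : pac < 1) (hpac'0 : 0 < pac') (hpac'1 : pac' < 1)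
    (hne : pcd ≠ pcd') :
    ((((condExp Yac Yac' (pcGiven pac pac' (pcd * pd / (pcd * pd + pcd' * (1 - pd))) ((1 - pcd) * pd / (1 - (pcd * pd + pcd' * (1 - pd)))) (pcd * pd + pcd' * (1 - pd))) ≥ condExp Yac Yac' (pcGiven pac pac' (1 - (pcd * pd / (pcd * pd + pcd' * (1 - pd)))) (1 - ((1 - pcd) * pd / (1 - (pcd * pd + pcd' * (1 - pd))))) (pcd * pd + pcd' * (1 - pd))) ∧ condExp Ybc Ybc' (pcGiven (1 - pac) (1 - pac') (pcd * pd / (pcd * pd + pcd' * (1 - pd))) ((1 - pcd) * pd / (1 - (pcd * pd + pcd' * (1 - pd)))) (pcd * pd + pcd' * (1 - pd))) ≥ condExp Ybc Ybc' (pcGiven (1 - pac) (1 - pac') (1 - (pcd * pd / (pcd * pd + pcd' * (1 - pd)))) (1 - ((1 - pcd) * pd / (1 - (pcd * pd + pcd' * (1 - pd))))) (pcd * pd + pcd' * (1 - pd)))) ∧ ((pac * pcd + pac' * (1 - pcd)) ≥ (pac * pcd' + pac' * (1 - pcd')))) ∨ ((condExp Yac Yac' (pcGiven pac pac' (pcd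 * pd / (pcd * pd + pcd' * (1 - pd))) ((1 - pcd) * pd / (1 - (pcd * pd + pcd' * (1 - pd)))) (pcd * pd + pcd' * (1 - pd))) ≤ condExp Yac Yac' (pcGiven pac pac' (1 - (pcd * pd / (pcd * pd + pcd' * (1 - pd)))) (1 - ((1 - pcd) * pd / (1 - (pcd * pd + pcd' * (1 - pd))))) (pcd * pd + pcd' * (1 - pd))) ∧ condExp Ybc Ybc' (pcGiven (1 - pac) (1 - pac') (pcd * pd / (pcd * pd + pcd' * (1 - pd))) ((1 - pcd) * pd / (1 - (pcd * pd + pcd' * (1 - pd)))) (pcd * pd + pcd' * (1 - pd))) ≤ condExp Ybc Ybc' (pcGiven (1 - pac) (1 - pac') (1 - (pcd * pd / (pcd * pd + pcd' * (1 - pd)))) (1 - ((1 - pcd) * pd / (1 - (pcd * pd + pcd' * (1 - pd))))) (pcd * pd + pcd' * (1 - pd)))) ∧ ((pac * pcd + pac' * (1 - pcd)) ≤ (pac * pcd' + pac' * (1 - pcd'))))) →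
      (((Yac ≥ Yac' ∧ Ybc ≥ Ybc') ∧ (pac ≥ pac')) ∨ ((Yac ≤ Yac' ∧ Ybc ≤ Ybc') ∧ (pac ≤ pac')))) ∧
    ((((condExp Yac Yac' (pcGiven pac pac' (pcd * pd / (pcd * pd + pcd' * (1 - pd))) ((1 - pcd) * pd / (1 - (pcd * pd + pcd' * (1 - pd)))) (pcd * pd + pcd' * (1 - pd))) ≥ condExp Yac Yac' (pcGiven pac pac' (1 - (pcd * pd / (pcd * pd + pcd' * (1 - pd)))) (1 - ((1 - pcd) * pd / (1 - (pcd * pd + pcd' * (1 - pd))))) (pcd * pd + pcd' * (1 - pd))) ∧ condExp Ybc Ybc' (pcGiven (1 - pac) (1 - pac') (pcd * pd / (pcd * pd + pcd' * (1 - pd))) ((1 - pcd) * pd / (1 - (pcd * pd + pcd' * (1 - pd)))) (pcd * pd + pcd' * (1 - pd))) ≥ condExp Ybc Ybc' (pcGiven (1 - pac) (1 - pac') (1 - (pcd * pd / (pcd * pd + pcd' * (1 - pd)))) (1 - ((1 - pcd) * pd / (1 - (pcd * pd + pcd' * (1 - pd))))) (pcd * pd + pcd' * (1 - pd)))) ∧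 ((pac * pcd + pac' * (1 - pcd)) ≤ (pac * pcd' + pac' * (1 - pcd')))) ∨ ((condExp Yac Yac' (pcGiven pac pac' (pcd * pd / (pcd * pd + pcd' * (1 - pd))) ((1 - pcd) * pd / (1 - (pcd * pd + pcd' * (1 - pd)))) (pcd * pd + pcd' * (1 - pd))) ≤ condExp Yac Yac' (pcGiven pac pac' (1 - (pcd * pd / (pcd * pd + pcd' * (1 - pd)))) (1 - ((1 - pcd) * pd / (1 - (pcd * pd + pcd' * (1 - pd))))) (pcd * pd + pcd' * (1 - pd))) ∧ condExp Ybc Ybc' (pcGiven (1 - pac) (1 - pac') (pcd * pd / (pcd * pd + pcd' * (1 - pd))) ((1 - pcd) * pd / (1 - (pcd * pd + pcd' * (1 - pd)))) (pcd * pd + pcd' * (1 - pd))) ≤ condExp Ybc Ybc' (pcGiven (1 - pac) (1 - pac') (1 - (pcd * pd / (pcd * pd + pcd' * (1 - pd)))) (1 - ((1 - pcd) * pd / (1 - (pcd * pd + pcd' * (1 - pd))))) (pcd * pd + pcd' * (1 - pd)))) ∧ ((pac * pcd + pac' * (1 - pcd)) ≥ (pac * pcd' + pac' * (1 - pcd')))))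 →
      (((Yac ≥ Yac' ∧ Ybc ≥ Ybc') ∧ (pac ≤ pac')) ∨ ((Yac ≤ Yac' ∧ Ybc ≤ Ybc') ∧ (pac ≥ pac')))) := by

  have h1pd : 0 < 1 - pd := by linarith
  set pc := pcd * pd + pcd' * (1 - pd) with hpcdef
  have hpc0 : 0 < pc := by nlinarith [mul_pos hpcd0 hpd0, mul_pos hpcd'0 h1pd]
  have hpc1 : pc < 1 := by nlinarith [mul_lt_mul_of_pos_right hpcd1 hpd0,
    mul_lt_mul_of_pos_right hpcd'1 h1pd]
  have h1pc : 0 < 1 - pc := by linarith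
  set v := pcd * pd / pc with hvdef
  set v' := (1 - pcd) * pd / (1 - pc) with hv'def
  have hv0 : 0 < v := by rw [hvdef]; exact div_pos (mul_pos hpcd0 hpd0) hpc0
  have hv1 : v < 1 := by
    rw [hvdef, div_lt_one hpc0]; nlinarith [mul_pos hpcd'0 h1pd]
  have hv'0 : 0 < v' := by
    rw [hv'def]; exact div_pos (mul_pos (by linarith) hpd0) h1pc
  have hv'1 : v' < 1 := by
    rw [hv'def, div_lt_one h1pc]; nlinarith [mul_lt_mul_of_pos_right hpcd'1 h1pd]
  have hb0 : 0 < 1 - pac := by linarith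
  have hb'0 : 0 < 1 - pac' := by linarith
  have h1v0 : 0 < 1 - v := by linarith
  have h1v'0 : 0 < 1 - v' := by linarith
  rcases hne.lt_or_gt with hlt | hlt
  · -- pcd < pcd' : v < v'
    have hvv : v < v' := by
      rw [hvdef, hv'def, div_lt_div_iff₀ hpc0 h1pc]
      nlinarith [mul_pos (mul_pos hpd0 h1pd) (sub_pos.2 hlt)]
    have hWY : pcGiven pac pac' v v' pc < pcGiven pac pac' (1 - v) (1 - v') pc :=
      pcGiven_lt _ _ _ _ _ _ _ hpac0 hpac'0 hpc0 hpc1 hv0 hv'0 h1v0 h1v'0 (by nlinarith)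
    have hWB : pcGiven (1 - pac) (1 - pac') v v' pc <
        pcGiven (1 - pac) (1 - pac') (1 - v) (1 - v') pc :=
      pcGiven_lt _ _ _ _ _ _ _ hb0 hb'0 hpc0 hpc1 hv0 hv'0 h1v0 h1v'0 (by nlinarith)
    have iY := condExp_le_iff Yac Yac' _ _ hWY
    have iY' := condExp_le_iff' Yac Yac' _ _ hWY
    have iB := condExp_le_iff Ybc Ybc' _ _ hWB
    have iB' := condExp_le_iff' Ybc Ybc' _ _ hWB
    have iA : pac * pcd' + pac' * (1 - pcd') ≤ pac * pcd + pac' * (1 - pcd) ↔ pac ≤ pac' := by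
      constructor <;> intro h <;> nlinarith [sub_pos.2 hlt]
    have iA' : pac * pcd + pac' * (1 - pcd) ≤ pac * pcd' + pac' * (1 - pcd') ↔ pac' ≤ pac := by
      constructor <;> intro h <;> nlinarith [sub_pos.2 hlt]
    constructor
    · rintro (⟨⟨h1, h2⟩, h3⟩ | ⟨⟨h1, h2⟩, h3⟩)
      · exact Or.inr ⟨⟨iY'.mp h1.le, iB'.mp h2.le⟩, iA.mp h3.le⟩
      · exact Or.inl ⟨⟨(iY.mp h1).ge, (iB.mp h2).ge⟩, (iA'.mp h3).ge⟩
    · rintro (⟨⟨h1, h2⟩, h3⟩ | ⟨⟨h1, h2⟩, h3⟩)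
      · exact Or.inr ⟨⟨iY'.mp h1.le, iB'.mp h2.le⟩, (iA'.mp h3).ge⟩
      · exact Or.inl ⟨⟨(iY.mp h1).ge, (iB.mp h2).ge⟩, iA.mp h3.le⟩
  · -- pcd' < pcd : v' < v
    have hvv : v' < v := by
      rw [hvdef, hv'def, div_lt_div_iff₀ h1pc hpc0]
      nlinarith [mul_pos (mul_pos hpd0 h1pd) (sub_pos.2 hlt)]
    have hWY : pcGiven pac pac' (1 - v) (1 - v') pc < pcGiven pac pac' v v' pc :=
      pcGiven_lt _ _ _ _ _ _ _ hpac0 hpac'0 hpc0 hpc1 h1v0 h1v'0 hv0 hv'0 (by nlinarith)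
    have hWB : pcGiven (1 - pac) (1 - pac') (1 - v) (1 - v') pc <
        pcGiven (1 - pac) (1 - pac') v v' pc :=
      pcGiven_lt _ _ _ _ _ _ _ hb0 hb'0 hpc0 hpc1 h1v0 h1v'0 hv0 hv'0 (by nlinarith)
    have iY := condExp_le_iff Yac Yac' _ _ hWY
    have iY' := condExp_le_iff' Yac Yac' _ _ hWY
    have iB := condExp_le_iff Ybc Ybc' _ _ hWB
    have iB' := condExp_le_iff' Ybc Ybc' _ _ hWB
    have iA : pac * pcd' + pac' * (1 - pcd') ≤ pac * pcd + pac' * (1 - pcd) ↔ pac' ≤ pac := by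
      constructor <;> intro h <;> nlinarith [sub_pos.2 hlt]
    have iA' : pac * pcd + pac' * (1 - pcd) ≤ pac * pcd' + pac' * (1 - pcd') ↔ pac ≤ pac' := by
      constructor <;> intro h <;> nlinarith [sub_pos.2 hlt]
    constructor
    · rintro (⟨⟨h1, h2⟩, h3⟩ | ⟨⟨h1, h2⟩, h3⟩)
      · exact Or.inl ⟨⟨(iY.mp h1.le).ge, (iB.mp h2.le).ge⟩, (iA.mp h3.le).ge⟩
      · exact Or.inr ⟨⟨iY'.mp h1, iB'.mp h2⟩, iA'.mp h3⟩
    · rintro (⟨⟨h1, h2⟩, h3⟩ | ⟨⟨h1, h2⟩, h3⟩)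
      · exact Or.inl ⟨⟨(iY.mp h1.le).ge, (iB.mp h2.le).ge⟩, iA'.mp h3⟩
      · exact Or.inr ⟨⟨iY'.mp h1, iB'.mp h2⟩, (iA.mp h3.le).ge⟩
end

section
/- In the driver setup: if E[Y|A,D] and E[A|D] are both nondecreasing in D or both nonincreasing in D, then RD_obs ≥ RD_true; and if one of E[Y|A,D], E[A|D] is nondecreasing in D and the other is nonincreasing in D, then RD_obs ≤ RD_true. -/
set_option maxHeartbeats 1600000

/-- Generic sign lemma. -/
lemma driver_sign (la lb pA1 pA2 Ea1 Ea2 Eb1 Eb2 RDt pd : ℝ)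
    (hla : 0 ≤ la) (hlb : 0 ≤ lb)
    (hkey : (Ea1 - Eb1) * pd + (Ea2 - Eb2) * (1 - pd) - RDt
      = la * ((pA1 - pA2) * (Ea1 - Ea2)) + lb * ((pA1 - pA2) * (Eb1 - Eb2))) :
    (((Ea1 ≥ Ea2 ∧ Eb1 ≥ Eb2) ∧ pA1 ≥ pA2) ∨ ((Ea1 ≤ Ea2 ∧ Eb1 ≤ Eb2) ∧ pA1 ≤ pA2) →
      (Ea1 - Eb1) * pd + (Ea2 - Eb2) * (1 - pd) ≥ RDt) ∧
    (((Ea1 ≥ Ea2 ∧ Eb1 ≥ Eb2) ∧ pA1 ≤ pA2) ∨ ((Ea1 ≤ Ea2 ∧ Eb1 ≤ Eb2) ∧ pA1 ≥ pA2) →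
      (Ea1 - Eb1) * pd + (Ea2 - Eb2) * (1 - pd) ≤ RDt) := by
  constructor
  · rintro (⟨⟨h1, h2⟩, h3⟩ | ⟨⟨h1, h2⟩, h3⟩)
    · have p1 : 0 ≤ la * ((pA1 - pA2) * (Ea1 - Ea2)) :=
        mul_nonneg hla (mul_nonneg (by linarith) (by linarith))
      have p2 : 0 ≤ lb * ((pA1 - pA2) * (Eb1 - Eb2)) :=
        mul_nonneg hlb (mul_nonneg (by linarith) (by linarith))
      linarith
    · have p1 : 0 ≤ la * ((pA1 - pA2) * (Ea1 - Ea2)) :=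
        mul_nonneg hla (by nlinarith)
      have p2 : 0 ≤ lb * ((pA1 - pA2) * (Eb1 - Eb2)) :=
        mul_nonneg hlb (by nlinarith)
      linarith
  · rintro (⟨⟨h1, h2⟩, h3⟩ | ⟨⟨h1, h2⟩, h3⟩)
    · have p1 : la * ((pA1 - pA2) * (Ea1 - Ea2)) ≤ 0 :=
        mul_nonpos_of_nonneg_of_nonpos hla (mul_nonpos_of_nonpos_of_nonneg (by linarith) (by linarith))
      have p2 : lb * ((pA1 - pA2) * (Eb1 - Eb2)) ≤ 0 :=
        mul_nonpos_of_nonneg_of_nonpos hlb (mul_nonpos_of_nonpos_of_nonneg (by linarith) (by linarith))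
      linarith
    · have p1 : la * ((pA1 - pA2) * (Ea1 - Ea2)) ≤ 0 :=
        mul_nonpos_of_nonneg_of_nonpos hla (mul_nonpos_of_nonneg_of_nonpos (by linarith) (by linarith))
      have p2 : lb * ((pA1 - pA2) * (Eb1 - Eb2)) ≤ 0 :=
        mul_nonpos_of_nonneg_of_nonpos hlb (mul_nonpos_of_nonneg_of_nonpos (by linarith) (by linarith))
      linarith

/-- Driver setup: if E[Y|A,D] and E[A|D] are both nondecreasing or both
nonincreasing in D, then RD_obs ≥ RD_true; if one is nondecreasing and the
other nonincreasing in D, then RD_obs ≤ RD_true. -/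
theorem stmt9 (pd pcd pcd' pac pac' Yac Yac' Ybc Ybc' : ℝ)
    (hpd0 : 0 < pd) (hpd1 : pd < 1)
    (hpcd0 : 0 < pcd) (hpcd1 : pcd < 1) (hpcd'0 : 0 < pcd') (hpcd'1 : pcd' < 1)
    (hpac0 : 0 < pac) (hpac1 : pac < 1) (hpac'0 : 0 < pac') (hpac'1 : pac' < 1)
    (hne : pcd ≠ pcd') :
    ((((condExp Yac Yac' (pcGiven pac pac' (pcd * pd / (pcd * pd + pcd' * (1 - pd))) ((1 - pcd) * pd / (1 - (pcd * pd + pcd' * (1 - pd)))) (pcd * pd + pcd' * (1 - pd))) ≥ condExp Yac Yac' (pcGiven pac pac' (1 - (pcd * pd / (pcd * pd + pcd' * (1 - pd)))) (1 - ((1 - pcd) * pd / (1 - (pcd * pd + pcd' * (1 - pd))))) (pcd * pd + pcd' * (1 - pd))) ∧ condExp Ybc Ybc' (pcGiven (1 - pac) (1 - pac') (pcd * pd / (pcd * pd + pcd' * (1 - pd))) ((1 - pcd) * pd / (1 - (pcd * pd + pcd' * (1 - pd)))) (pcd * pd + pcd' * (1 - pd))) ≥ condExp Ybc Ybc' (pcGiven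 (1 - pac) (1 - pac') (1 - (pcd * pd / (pcd * pd + pcd' * (1 - pd)))) (1 - ((1 - pcd) * pd / (1 - (pcd * pd + pcd' * (1 - pd))))) (pcd * pd + pcd' * (1 - pd)))) ∧ ((pac * pcd + pac' * (1 - pcd)) ≥ (pac * pcd' + pac' * (1 - pcd')))) ∨ ((condExp Yac Yac' (pcGiven pac pac' (pcd * pd / (pcd * pd + pcd' * (1 - pd))) ((1 - pcd) * pd / (1 - (pcd * pd + pcd' * (1 - pd)))) (pcd * pd + pcd' * (1 - pd))) ≤ condExp Yac Yac' (pcGiven pac pac' (1 - (pcd * pd / (pcd * pd + pcd' * (1 - pd)))) (1 - ((1 - pcd) * pd / (1 - (pcd * pd + pcd' * (1 - pd))))) (pcd * pd + pcd' * (1 - pd))) ∧ condExp Ybc Ybc' (pcGiven (1 - pac) (1 - pac') (pcd * pd / (pcd * pd + pcd' * (1 - pd))) ((1 - pcd) * pd / (1 - (pcd * pd + pcd' * (1 - pd)))) (pcd * pd + pcd' * (1 - pd))) ≤ condExp Ybc Ybc' (pcGiven (1 - pac) (1 - pac') (1 - (pcd * pd / (pcd * pd + pcd' * (1 - pd))))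 (1 - ((1 - pcd) * pd / (1 - (pcd * pd + pcd' * (1 - pd))))) (pcd * pd + pcd' * (1 - pd)))) ∧ ((pac * pcd + pac' * (1 - pcd)) ≤ (pac * pcd' + pac' * (1 - pcd'))))) →
      ((condExp Yac Yac' (pcGiven pac pac' (pcd * pd / (pcd * pd + pcd' * (1 - pd))) ((1 - pcd) * pd / (1 - (pcd * pd + pcd' * (1 - pd)))) (pcd * pd + pcd' * (1 - pd))) - condExp Ybc Ybc' (pcGiven (1 - pac) (1 - pac') (pcd * pd / (pcd * pd + pcd' * (1 - pd))) ((1 - pcd) * pd / (1 - (pcd * pd + pcd' * (1 - pd)))) (pcd * pd + pcd' * (1 - pd)))) * pd + (condExp Yac Yac' (pcGiven pac pac' (1 - (pcd * pd / (pcd * pd + pcd' * (1 - pd)))) (1 - ((1 - pcd) * pd / (1 - (pcd * pd + pcd' * (1 - pd))))) (pcd * pd + pcd' * (1 - pd))) - condExp Ybc Ybc' (pcGiven (1 - pac) (1 - pac') (1 - (pcd * pd / (pcd * pd + pcd' * (1 - pd)))) (1 - ((1 - pcd) * pd / (1 - (pcd * pd + pcd' * (1 - pd))))) (pcd * pd +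 pcd' * (1 - pd)))) * (1 - pd)) ≥ ((Yac - Ybc) * (pcd * pd + pcd' * (1 - pd)) + (Yac' - Ybc') * (1 - (pcd * pd + pcd' * (1 - pd))))) ∧
    ((((condExp Yac Yac' (pcGiven pac pac' (pcd * pd / (pcd * pd + pcd' * (1 - pd))) ((1 - pcd) * pd / (1 - (pcd * pd + pcd' * (1 - pd)))) (pcd * pd + pcd' * (1 - pd))) ≥ condExp Yac Yac' (pcGiven pac pac' (1 - (pcd * pd / (pcd * pd + pcd' * (1 - pd)))) (1 - ((1 - pcd) * pd / (1 - (pcd * pd + pcd' * (1 - pd))))) (pcd * pd + pcd' * (1 - pd))) ∧ condExp Ybc Ybc' (pcGiven (1 - pac) (1 - pac') (pcd * pd / (pcd * pd + pcd' * (1 - pd))) ((1 - pcd) * pd / (1 - (pcd * pd + pcd' * (1 - pd)))) (pcd * pd + pcd' * (1 - pd))) ≥ condExp Ybc Ybc' (pcGiven (1 - pac) (1 - pac') (1 - (pcd * pd / (pcd * pd + pcd' * (1 - pd)))) (1 - ((1 - pcd) * pd / (1 - (pcd * pd + pcd' * (1 - pd))))) (pcd * pd + pcd' * (1 - pd))))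 ∧ ((pac * pcd + pac' * (1 - pcd)) ≤ (pac * pcd' + pac' * (1 - pcd')))) ∨ ((condExp Yac Yac' (pcGiven pac pac' (pcd * pd / (pcd * pd + pcd' * (1 - pd))) ((1 - pcd) * pd / (1 - (pcd * pd + pcd' * (1 - pd)))) (pcd * pd + pcd' * (1 - pd))) ≤ condExp Yac Yac' (pcGiven pac pac' (1 - (pcd * pd / (pcd * pd + pcd' * (1 - pd)))) (1 - ((1 - pcd) * pd / (1 - (pcd * pd + pcd' * (1 - pd))))) (pcd * pd + pcd' * (1 - pd))) ∧ condExp Ybc Ybc' (pcGiven (1 - pac) (1 - pac') (pcd * pd / (pcd * pd + pcd' * (1 - pd))) ((1 - pcd) * pd / (1 - (pcd * pd + pcd' * (1 - pd)))) (pcd * pd + pcd' * (1 - pd))) ≤ condExp Ybc Ybc' (pcGiven (1 - pac) (1 - pac') (1 - (pcd * pd / (pcd * pd + pcd' * (1 - pd)))) (1 - ((1 - pcd) * pd / (1 - (pcd * pd + pcd' * (1 - pd))))) (pcd * pd + pcd' * (1 - pd)))) ∧ ((pac * pcd + pac' * (1 - pcd)) ≥ (pac * pcd' + pac' * (1 -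 pcd'))))) →
      ((condExp Yac Yac' (pcGiven pac pac' (pcd * pd / (pcd * pd + pcd' * (1 - pd))) ((1 - pcd) * pd / (1 - (pcd * pd + pcd' * (1 - pd)))) (pcd * pd + pcd' * (1 - pd))) - condExp Ybc Ybc' (pcGiven (1 - pac) (1 - pac') (pcd * pd / (pcd * pd + pcd' * (1 - pd))) ((1 - pcd) * pd / (1 - (pcd * pd + pcd' * (1 - pd)))) (pcd * pd + pcd' * (1 - pd)))) * pd + (condExp Yac Yac' (pcGiven pac pac' (1 - (pcd * pd / (pcd * pd + pcd' * (1 - pd)))) (1 - ((1 - pcd) * pd / (1 - (pcd * pd + pcd' * (1 - pd))))) (pcd * pd + pcd' * (1 - pd))) - condExp Ybc Ybc' (pcGiven (1 - pac) (1 - pac') (1 - (pcd * pd / (pcd * pd + pcd' * (1 - pd)))) (1 - ((1 - pcd) * pd / (1 - (pcd * pd + pcd' * (1 - pd))))) (pcd * pd + pcd' * (1 - pd)))) * (1 - pd)) ≤ ((Yac - Ybc) * (pcd * pd + pcd' * (1 - pd)) + (Yac' - Ybc') * (1 - (pcd * pd + pcd' * (1 - pd))))) := by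
  have hP0 : 0 < pcd * pd + pcd' * (1 - pd) := by nlinarith
  have hP1 : pcd * pd + pcd' * (1 - pd) < 1 := by nlinarith
  have hP1' : 0 < 1 - (pcd * pd + pcd' * (1 - pd)) := by linarith
  have hD1 : 0 < pac * pcd + pac' * (1 - pcd) := by nlinarith
  have hD2 : 0 < pac * pcd' + pac' * (1 - pcd') := by nlinarith
  have hE1 : 0 < (1 - pac) * pcd + (1 - pac') * (1 - pcd) := by nlinarith
  have hE2 : 0 < (1 - pac) * pcd' + (1 - pac') * (1 - pcd') := by nlinarith
  have hne2 : (0:ℝ) < (pcd - pcd') ^ 2 := by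
    have : pcd - pcd' ≠ 0 := sub_ne_zero.mpr hne
    positivity
  have hw1 : pcGiven pac pac' (pcd * pd / (pcd * pd + pcd' * (1 - pd))) ((1 - pcd) * pd / (1 - (pcd * pd + pcd' * (1 - pd)))) (pcd * pd + pcd' * (1 - pd)) = pac * pcd / (pac * pcd + pac' * (1 - pcd)) := by
    have hnum : pac * (pcd * pd / (pcd * pd + pcd' * (1 - pd))) * (pcd * pd + pcd' * (1 - pd)) = pac * pcd * pd := by
      field_simp
    have hden : pac * pcd * pd + pac' * ((1 - pcd) * pd / (1 - (pcd * pd + pcd' * (1 - pd)))) * (1 - (pcd * pd + pcd' * (1 - pd))) = pd * (pac * pcd + pac' * (1 - pcd)) := by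
      field_simp
    rw [pcGiven, hnum, hden, div_eq_div_iff (mul_pos hpd0 hD1).ne' hD1.ne']
    ring
  have hw2 : pcGiven pac pac' (1 - (pcd * pd / (pcd * pd + pcd' * (1 - pd)))) (1 - ((1 - pcd) * pd / (1 - (pcd * pd + pcd' * (1 - pd))))) (pcd * pd + pcd' * (1 - pd)) = pac * pcd' / (pac * pcd' + pac' * (1 - pcd')) := by
    have hnum : pac * (1 - (pcd * pd / (pcd * pd + pcd' * (1 - pd)))) * (pcd * pd + pcd' * (1 - pd)) = pac * pcd' * (1 - pd) := by
      field_simp; ring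
    have hden : pac * pcd' * (1 - pd) + pac' * (1 - ((1 - pcd) * pd / (1 - (pcd * pd + pcd' * (1 - pd))))) * (1 - (pcd * pd + pcd' * (1 - pd))) = (1 - pd) * (pac * pcd' + pac' * (1 - pcd')) := by
      rw [one_sub_div hP1'.ne', mul_assoc pac', div_mul_cancel₀ _ hP1'.ne']; ring
    have h1pd : (0:ℝ) < 1 - pd := by linarith
    rw [pcGiven, hnum, hden, div_eq_div_iff (mul_pos h1pd hD2).ne' hD2.ne']
    ring
  have hw3 : pcGiven (1 - pac) (1 - pac') (pcd * pd / (pcd * pd + pcd' * (1 - pd))) ((1 - pcd) * pd / (1 - (pcd * pd + pcd' * (1 - pd)))) (pcd * pd + pcd' * (1 - pd)) = (1 - pac) * pcd / ((1 - pac) * pcd + (1 - pac') * (1 - pcd)) := by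
    have hnum : (1 - pac) * (pcd * pd / (pcd * pd + pcd' * (1 - pd))) * (pcd * pd + pcd' * (1 - pd)) = (1 - pac) * pcd * pd := by
      field_simp
    have hden : (1 - pac) * pcd * pd + (1 - pac') * ((1 - pcd) * pd / (1 - (pcd * pd + pcd' * (1 - pd)))) * (1 - (pcd * pd + pcd' * (1 - pd))) = pd * ((1 - pac) * pcd + (1 - pac') * (1 - pcd)) := by
      field_simp
    rw [pcGiven, hnum, hden, div_eq_div_iff (mul_pos hpd0 hE1).ne' hE1.ne']
    ring
  have hw4 : pcGiven (1 - pac) (1 - pac') (1 - (pcd * pd / (pcd * pd + pcd' * (1 - pd)))) (1 - ((1 - pcd) * pd / (1 - (pcd * pd + pcd' * (1 - pd))))) (pcd * pd + pcd' * (1 - pd)) = (1 - pac) * pcd' / ((1 - pac) * pcd' + (1 - pac') * (1 - pcd')) := by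
    have hnum : (1 - pac) * (1 - (pcd * pd / (pcd * pd + pcd' * (1 - pd)))) * (pcd * pd + pcd' * (1 - pd)) = (1 - pac) * pcd' * (1 - pd) := by
      field_simp; ring
    have hden : (1 - pac) * pcd' * (1 - pd) + (1 - pac') * (1 - ((1 - pcd) * pd / (1 - (pcd * pd + pcd' * (1 - pd))))) * (1 - (pcd * pd + pcd' * (1 - pd))) = (1 - pd) * ((1 - pac) * pcd' + (1 - pac') * (1 - pcd')) := by
      rw [one_sub_div hP1'.ne', mul_assoc (1 - pac'), div_mul_cancel₀ _ hP1'.ne']; ring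
    have h1pd : (0:ℝ) < 1 - pd := by linarith
    rw [pcGiven, hnum, hden, div_eq_div_iff (mul_pos h1pd hE2).ne' hE2.ne']
    ring
  rw [hw1, hw2, hw3, hw4]
  have hla : (0:ℝ) ≤ (pd * pcd * (1 - pcd) * (pac * pcd' + pac' * (1 - pcd')) + (1 - pd) * pcd' * (1 - pcd') * (pac * pcd + pac' * (1 - pcd))) / (pac * pac' * (pcd - pcd') ^ 2) := by
    apply le_of_lt
    apply div_pos
    · have t1 : 0 < pd * pcd * (1 - pcd) * (pac * pcd' + pac' * (1 - pcd')) :=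
        mul_pos (mul_pos (mul_pos hpd0 hpcd0) (by linarith)) hD2
      have t2 : 0 < (1 - pd) * pcd' * (1 - pcd') * (pac * pcd + pac' * (1 - pcd)) :=
        mul_pos (mul_pos (mul_pos (by linarith) hpcd'0) (by linarith)) hD1
      linarith
    · exact mul_pos (mul_pos hpac0 hpac'0) hne2
  have hlb : (0:ℝ) ≤ (pd * pcd * (1 - pcd) * ((1 - pac) * pcd' + (1 - pac') * (1 - pcd')) + (1 - pd) * pcd' * (1 - pcd') * ((1 - pac) * pcd + (1 - pac') * (1 - pcd))) / ((1 - pac) * (1 - pac') * (pcd - pcd') ^ 2) := by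
    apply le_of_lt
    apply div_pos
    · have t1 : 0 < pd * pcd * (1 - pcd) * ((1 - pac) * pcd' + (1 - pac') * (1 - pcd')) :=
        mul_pos (mul_pos (mul_pos hpd0 hpcd0) (by linarith)) hE2
      have t2 : 0 < (1 - pd) * pcd' * (1 - pcd') * ((1 - pac) * pcd + (1 - pac') * (1 - pcd)) :=
        mul_pos (mul_pos (mul_pos (by linarith) hpcd'0) (by linarith)) hE1
      linarith
    · exact mul_pos (mul_pos (by linarith) (by linarith)) hne2
  have hkA : condExp Yac Yac' (pac * pcd / (pac * pcd + pac' * (1 - pcd))) * pd + condExp Yac Yac' (pac * pcd' / (pac * pcd' + pac' * (1 - pcd'))) * (1 - pd) - (Yac * (pcd * pd + pcd' * (1 - pd)) + Yac' * (1 - (pcd * pd + pcd' * (1 - pd)))) = ((pd * pcd * (1 - pcd) * (pac * pcd' + pac' * (1 - pcd')) + (1 - pd) * pcd' * (1 - pcd') * (pac * pcd + pac' * (1 - pcd))) / (pac * pac' * (pcd - pcd') ^ 2)) * (((pac * pcd + pac' * (1 - pcd)) - (pac * pcd' + pac' * (1 - pcd'))) * (condExp Yac Yac' (pac * pcd / (pac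 * pcd + pac' * (1 - pcd))) - condExp Yac Yac' (pac * pcd' / (pac * pcd' + pac' * (1 - pcd'))))) := by
    simp only [condExp]
    have h1 : pac * pcd + pac' * (1 - pcd) ≠ 0 := hD1.ne'
    have h2 : pac * pcd' + pac' * (1 - pcd') ≠ 0 := hD2.ne'
    have h5 : pac ≠ 0 := hpac0.ne'
    have h6 : pac' ≠ 0 := hpac'0.ne'
    have h9 : pcd - pcd' ≠ 0 := sub_ne_zero.mpr hne
    field_simp
    ring
  have hkB : condExp Ybc Ybc' ((1 - pac) * pcd / ((1 - pac) * pcd + (1 - pac') * (1 - pcd))) * pd + condExp Ybc Ybc' ((1 - pac) * pcd' / ((1 - pac) * pcd' + (1 - pac') * (1 - pcd'))) * (1 - pd) - (Ybc * (pcd * pd + pcd' * (1 - pd)) + Ybc' * (1 - (pcd * pd + pcd' * (1 - pd)))) = -(((pd * pcd * (1 - pcd) * ((1 - pac) * pcd' + (1 - pac') * (1 - pcd')) + (1 - pd) * pcd' * (1 - pcd') * ((1 - pac) * pcd + (1 - pac') * (1 - pcd))) / ((1 - pac) * (1 - pac') * (pcd - pcd') ^ 2)) * (((pac * pcd + pac'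 * (1 - pcd)) - (pac * pcd' + pac' * (1 - pcd'))) * (condExp Ybc Ybc' ((1 - pac) * pcd / ((1 - pac) * pcd + (1 - pac') * (1 - pcd))) - condExp Ybc Ybc' ((1 - pac) * pcd' / ((1 - pac) * pcd' + (1 - pac') * (1 - pcd')))))) := by
    simp only [condExp]
    have h3 : (1 - pac) * pcd + (1 - pac') * (1 - pcd) ≠ 0 := hE1.ne'
    have h4 : (1 - pac) * pcd' + (1 - pac') * (1 - pcd') ≠ 0 := hE2.ne'
    have h7 : (1:ℝ) - pac ≠ 0 := by intro h; nlinarith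
    have h8 : (1:ℝ) - pac' ≠ 0 := by intro h; nlinarith
    have h9 : pcd - pcd' ≠ 0 := sub_ne_zero.mpr hne
    field_simp
    ring
  have hkey : (condExp Yac Yac' (pac * pcd / (pac * pcd + pac' * (1 - pcd))) - condExp Ybc Ybc' ((1 - pac) * pcd / ((1 - pac) * pcd + (1 - pac') * (1 - pcd)))) * pd + (condExp Yac Yac' (pac * pcd' / (pac * pcd' + pac' * (1 - pcd'))) - condExp Ybc Ybc' ((1 - pac) * pcd' / ((1 - pac) * pcd' + (1 - pac') * (1 - pcd')))) * (1 - pd) - ((Yac - Ybc) * (pcd * pd + pcd' * (1 - pd)) + (Yac' - Ybc') * (1 - (pcd * pd + pcd' * (1 - pd)))) = ((pd * pcd * (1 - pcd) * (pac * pcd' + pac' * (1 - pcd')) + (1 - pd) * pcd' * (1 - pcd') * (pac * pcd + pac' * (1 - pcd))) / (pac * pac' * (pcd - pcd') ^ 2)) * (((pac * pcd + pac' * (1 - pcd)) - (pac * pcd' + pac' * (1 - pcd'))) * (condExp Yac Yac' (pac * pcd / (pac * pcd + pac' * (1 - pcd))) - condExp Yac Yac' (pac * pcd' / (pac * pcd'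 + pac' * (1 - pcd'))))) + ((pd * pcd * (1 - pcd) * ((1 - pac) * pcd' + (1 - pac') * (1 - pcd')) + (1 - pd) * pcd' * (1 - pcd') * ((1 - pac) * pcd + (1 - pac') * (1 - pcd))) / ((1 - pac) * (1 - pac') * (pcd - pcd') ^ 2)) * (((pac * pcd + pac' * (1 - pcd)) - (pac * pcd' + pac' * (1 - pcd'))) * (condExp Ybc Ybc' ((1 - pac) * pcd / ((1 - pac) * pcd + (1 - pac') * (1 - pcd))) - condExp Ybc Ybc' ((1 - pac) * pcd' / ((1 - pac) * pcd' + (1 - pac') * (1 - pcd'))))) := by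
    linear_combination hkA - hkB
  exact driver_sign _ _ _ _ _ _ _ _ _ _ hla hlb hkey
end

section
/- In the driver setup: if E[Y|A,C] and E[A|C] are both nondecreasing in C or both nonincreasing in C, then E[Y|A,D] and E[A|D] are both nondecreasing in D or both nonincreasing in D; and if one of E[Y|A,C], E[A|C] is nondecreasing in C and the other is nonincreasing in C, then one of E[Y|A,D], E[A|D] is nondecreasing in D and the other is nonincreasing in D. -/
private lemma wle_aux (pxc pxc' dc dc' pc : ℝ) (h1 : 0 < pxc) (h2 : 0 < pxc')
    (h3 : 0 < dc) (h4 : dc < 1) (h5 : 0 < dc') (h6 : dc' < 1)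
    (h7 : 0 < pc) (h8 : pc < 1) (hd : dc' ≤ dc) :
    pcGiven pxc pxc' (1 - dc) (1 - dc') pc ≤ pcGiven pxc pxc' dc dc' pc := by
  unfold pcGiven
  have hpc1 : 0 < 1 - pc := by linarith
  have hden1 : 0 < pxc * (1 - dc) * pc + pxc' * (1 - dc') * (1 - pc) := by
    have := mul_pos (mul_pos h1 (by linarith : (0:ℝ) < 1 - dc)) h7
    have := mul_pos (mul_pos h2 (by linarith : (0:ℝ) < 1 - dc')) hpc1
    linarith
  have hden2 : 0 < pxc * dc * pc + pxc' * dc' * (1 - pc) := by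
    have := mul_pos (mul_pos h1 h3) h7
    have := mul_pos (mul_pos h2 h5) hpc1
    linarith
  rw [div_le_div_iff₀ hden1 hden2]
  nlinarith [mul_nonneg (mul_nonneg (mul_pos h1 h2).le (mul_pos h7 hpc1).le) (sub_nonneg.2 hd)]

private lemma wge_aux (pxc pxc' dc dc' pc : ℝ) (h1 : 0 < pxc) (h2 : 0 < pxc')
    (h3 : 0 < dc) (h4 : dc < 1) (h5 : 0 < dc') (h6 : dc' < 1)
    (h7 : 0 < pc) (h8 : pc < 1) (hd : dc ≤ dc') :
    pcGiven pxc pxc' dc dc' pc ≤ pcGiven pxc pxc' (1 - dc) (1 - dc') pc := by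
  have := wle_aux pxc pxc' (1 - dc) (1 - dc') pc h1 h2 (by linarith) (by linarith)
    (by linarith) (by linarith) h7 h8 (by linarith)
  rw [show (1:ℝ) - (1 - dc) = dc by ring, show (1:ℝ) - (1 - dc') = dc' by ring] at this
  exact this

private lemma ceMono (yc yc' w w' : ℝ) (hy : yc' ≤ yc) (hw : w' ≤ w) :
    condExp yc yc' w' ≤ condExp yc yc' w := by
  unfold condExp; nlinarith [mul_nonneg (sub_nonneg.2 hy) (sub_nonneg.2 hw)]

private lemma ceAnti (yc yc' w w' : ℝ) (hy : yc ≤ yc') (hw : w' ≤ w) :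
    condExp yc yc' w ≤ condExp yc yc' w' := by
  unfold condExp; nlinarith [mul_nonneg (sub_nonneg.2 hy) (sub_nonneg.2 hw)]

set_option maxHeartbeats 1600000 in
/-- Driver setup: if E[Y|A,C] and E[A|C] are both nondecreasing or both
nonincreasing in C, then E[Y|A,D] and E[A|D] are both nondecreasing or both
nonincreasing in D; if one is nondecreasing and the other nonincreasing in C,
then likewise in D. -/
theorem stmt10 (pd pcd pcd' pac pac' Yac Yac' Ybc Ybc' : ℝ)
    (hpd0 : 0 < pd) (hpd1 : pd < 1)
    (hpcd0 : 0 < pcd) (hpcd1 : pcd < 1) (hpcd'0 : 0 < pcd') (hpcd'1 : pcd' < 1)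
    (hpac0 : 0 < pac) (hpac1 : pac < 1) (hpac'0 : 0 < pac') (hpac'1 : pac' < 1)
    (hne : pcd ≠ pcd') :
    ((((Yac ≥ Yac' ∧ Ybc ≥ Ybc') ∧ (pac ≥ pac')) ∨ ((Yac ≤ Yac' ∧ Ybc ≤ Ybc') ∧ (pac ≤ pac'))) →
      (((condExp Yac Yac' (pcGiven pac pac' (pcd * pd / (pcd * pd + pcd' * (1 - pd))) ((1 - pcd) * pd / (1 - (pcd * pd + pcd' * (1 - pd)))) (pcd * pd + pcd' * (1 - pd))) ≥ condExp Yac Yac' (pcGiven pac pac' (1 - (pcd * pd / (pcd * pd + pcd' * (1 - pd)))) (1 - ((1 - pcd) * pd / (1 - (pcd * pd + pcd' * (1 - pd))))) (pcd * pd + pcd' * (1 - pd))) ∧ condExp Ybc Ybc' (pcGiven (1 - pac) (1 - pac') (pcd * pd / (pcd * pd + pcd' * (1 - pd))) ((1 - pcd) * pd / (1 - (pcd * pd + pcd' * (1 - pd)))) (pcd * pd + pcd' * (1 - pd))) ≥ condExp Ybc Ybc' (pcGiven (1 - pac) (1 - pac') (1 - (pcd * pd / (pcd * pd + pcd' * (1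 - pd)))) (1 - ((1 - pcd) * pd / (1 - (pcd * pd + pcd' * (1 - pd))))) (pcd * pd + pcd' * (1 - pd)))) ∧ ((pac * pcd + pac' * (1 - pcd)) ≥ (pac * pcd' + pac' * (1 - pcd')))) ∨ ((condExp Yac Yac' (pcGiven pac pac' (pcd * pd / (pcd * pd + pcd' * (1 - pd))) ((1 - pcd) * pd / (1 - (pcd * pd + pcd' * (1 - pd)))) (pcd * pd + pcd' * (1 - pd))) ≤ condExp Yac Yac' (pcGiven pac pac' (1 - (pcd * pd / (pcd * pd + pcd' * (1 - pd)))) (1 - ((1 - pcd) * pd / (1 - (pcd * pd + pcd' * (1 - pd))))) (pcd * pd + pcd' * (1 - pd))) ∧ condExp Ybc Ybc' (pcGiven (1 - pac) (1 - pac') (pcd * pd / (pcd * pd + pcd' * (1 - pd))) ((1 - pcd) * pd / (1 - (pcd * pd + pcd' * (1 - pd)))) (pcd * pd + pcd' * (1 - pd))) ≤ condExp Ybc Ybc' (pcGiven (1 - pac) (1 - pac') (1 - (pcd * pd / (pcd * pd + pcd' * (1 - pd)))) (1 - ((1 - pcd) * pd / (1 - (pcd * pd + pcd' * (1 - pd)))))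 (pcd * pd + pcd' * (1 - pd)))) ∧ ((pac * pcd + pac' * (1 - pcd)) ≤ (pac * pcd' + pac' * (1 - pcd')))))) ∧
    ((((Yac ≥ Yac' ∧ Ybc ≥ Ybc') ∧ (pac ≤ pac')) ∨ ((Yac ≤ Yac' ∧ Ybc ≤ Ybc') ∧ (pac ≥ pac'))) →
      (((condExp Yac Yac' (pcGiven pac pac' (pcd * pd / (pcd * pd + pcd' * (1 - pd))) ((1 - pcd) * pd / (1 - (pcd * pd + pcd' * (1 - pd)))) (pcd * pd + pcd' * (1 - pd))) ≥ condExp Yac Yac' (pcGiven pac pac' (1 - (pcd * pd / (pcd * pd + pcd' * (1 - pd)))) (1 - ((1 - pcd) * pd / (1 - (pcd * pd + pcd' * (1 - pd))))) (pcd * pd + pcd' * (1 - pd))) ∧ condExp Ybc Ybc' (pcGiven (1 - pac) (1 - pac') (pcd * pd / (pcd * pd + pcd' * (1 - pd))) ((1 - pcd) * pd / (1 - (pcd * pd + pcd' * (1 - pd)))) (pcd * pd + pcd' * (1 - pd))) ≥ condExp Ybc Ybc' (pcGiven (1 - pac) (1 - pac') (1 - (pcd * pd / (pcd * pd + pcd'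 * (1 - pd)))) (1 - ((1 - pcd) * pd / (1 - (pcd * pd + pcd' * (1 - pd))))) (pcd * pd + pcd' * (1 - pd)))) ∧ ((pac * pcd + pac' * (1 - pcd)) ≤ (pac * pcd' + pac' * (1 - pcd')))) ∨ ((condExp Yac Yac' (pcGiven pac pac' (pcd * pd / (pcd * pd + pcd' * (1 - pd))) ((1 - pcd) * pd / (1 - (pcd * pd + pcd' * (1 - pd)))) (pcd * pd + pcd' * (1 - pd))) ≤ condExp Yac Yac' (pcGiven pac pac' (1 - (pcd * pd / (pcd * pd + pcd' * (1 - pd)))) (1 - ((1 - pcd) * pd / (1 - (pcd * pd + pcd' * (1 - pd))))) (pcd * pd + pcd' * (1 - pd))) ∧ condExp Ybc Ybc' (pcGiven (1 - pac) (1 - pac') (pcd * pd / (pcd * pd + pcd' * (1 - pd))) ((1 - pcd) * pd / (1 - (pcd * pd + pcd' * (1 - pd)))) (pcd * pd + pcd' * (1 - pd))) ≤ condExp Ybc Ybc' (pcGiven (1 - pac) (1 - pac') (1 - (pcd * pd / (pcd * pd + pcd' * (1 - pd)))) (1 - ((1 - pcd) * pd / (1 - (pcd * pd + pcd' * (1 -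 pd))))) (pcd * pd + pcd' * (1 - pd)))) ∧ ((pac * pcd + pac' * (1 - pcd)) ≥ (pac * pcd' + pac' * (1 - pcd')))))) := by
  
  set pc := pcd * pd + pcd' * (1 - pd) with hpc
  have hpc0 : 0 < pc := by rw [hpc]; nlinarith
  have hpc1 : pc < 1 := by rw [hpc]; nlinarith
  have h1pc : 0 < 1 - pc := by linarith
  set dc := pcd * pd / pc with hdc
  set dc' := (1 - pcd) * pd / (1 - pc) with hdc'
  have hdc0 : 0 < dc := div_pos (mul_pos hpcd0 hpd0) hpc0
  have hdc1 : dc < 1 := by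
    rw [hdc, div_lt_one hpc0, hpc]; nlinarith
  have hdc'0 : 0 < dc' := div_pos (mul_pos (by linarith) hpd0) h1pc
  have hdc'1 : dc' < 1 := by
    rw [hdc', div_lt_one h1pc, hpc]; nlinarith
  have hb0 : (0:ℝ) < 1 - pac := by linarith
  have hb0' : (0:ℝ) < 1 - pac' := by linarith
  rcases lt_or_gt_of_ne hne with hcc | hcc
  · -- pcd < pcd' : dc ≤ dc'
    have hdd : dc ≤ dc' := by
      rw [hdc, hdc', div_le_div_iff₀ hpc0 h1pc, hpc]
      nlinarith [mul_nonneg (mul_nonneg hpd0.le (by linarith : (0:ℝ) ≤ 1 - pd))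
        (by linarith : (0:ℝ) ≤ pcd' - pcd)]
    have hw1 := wge_aux pac pac' dc dc' pc hpac0 hpac'0 hdc0 hdc1 hdc'0 hdc'1 hpc0 hpc1 hdd
    have hw2 := wge_aux (1 - pac) (1 - pac') dc dc' pc hb0 hb0' hdc0 hdc1 hdc'0 hdc'1 hpc0 hpc1 hdd
    constructor
    · rintro (⟨⟨hy1, hy2⟩, ha⟩ | ⟨⟨hy1, hy2⟩, ha⟩)
      · exact Or.inr ⟨⟨ceMono _ _ _ _ hy1 hw1, ceMono _ _ _ _ hy2 hw2⟩,
          by nlinarith [mul_nonneg (sub_nonneg.2 ha) (sub_nonneg.2 hcc.le)]⟩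
      · exact Or.inl ⟨⟨ceAnti _ _ _ _ hy1 hw1, ceAnti _ _ _ _ hy2 hw2⟩,
          by nlinarith [mul_nonneg (sub_nonneg.2 ha) (sub_nonneg.2 hcc.le)]⟩
    · rintro (⟨⟨hy1, hy2⟩, ha⟩ | ⟨⟨hy1, hy2⟩, ha⟩)
      · exact Or.inr ⟨⟨ceMono _ _ _ _ hy1 hw1, ceMono _ _ _ _ hy2 hw2⟩,
          by nlinarith [mul_nonneg (sub_nonneg.2 ha) (sub_nonneg.2 hcc.le)]⟩
      · exact Or.inl ⟨⟨ceAnti _ _ _ _ hy1 hw1, ceAnti _ _ _ _ hy2 hw2⟩,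
          by nlinarith [mul_nonneg (sub_nonneg.2 ha) (sub_nonneg.2 hcc.le)]⟩
  · -- pcd' < pcd : dc' ≤ dc
    have hdd : dc' ≤ dc := by
      rw [hdc, hdc', div_le_div_iff₀ h1pc hpc0, hpc]
      nlinarith [mul_nonneg (mul_nonneg hpd0.le (by linarith : (0:ℝ) ≤ 1 - pd))
        (by linarith : (0:ℝ) ≤ pcd - pcd')]
    have hw1 := wle_aux pac pac' dc dc' pc hpac0 hpac'0 hdc0 hdc1 hdc'0 hdc'1 hpc0 hpc1 hdd
    have hw2 := wle_aux (1 - pac) (1 - pac') dc dc' pc hb0 hb0' hdc0 hdc1 hdc'0 hdc'1 hpc0 hpc1 hdd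
    constructor
    · rintro (⟨⟨hy1, hy2⟩, ha⟩ | ⟨⟨hy1, hy2⟩, ha⟩)
      · exact Or.inl ⟨⟨ceMono _ _ _ _ hy1 hw1, ceMono _ _ _ _ hy2 hw2⟩,
          by nlinarith [mul_nonneg (sub_nonneg.2 ha) (sub_nonneg.2 hcc.le)]⟩
      · exact Or.inr ⟨⟨ceAnti _ _ _ _ hy1 hw1, ceAnti _ _ _ _ hy2 hw2⟩,
          by nlinarith [mul_nonneg (sub_nonneg.2 ha) (sub_nonneg.2 hcc.le)]⟩
    · rintro (⟨⟨hy1, hy2⟩, ha⟩ | ⟨⟨hy1, hy2⟩, ha⟩)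
      · exact Or.inl ⟨⟨ceMono _ _ _ _ hy1 hw1, ceMono _ _ _ _ hy2 hw2⟩,
          by nlinarith [mul_nonneg (sub_nonneg.2 ha) (sub_nonneg.2 hcc.le)]⟩
      · exact Or.inr ⟨⟨ceAnti _ _ _ _ hy1 hw1, ceAnti _ _ _ _ hy2 hw2⟩,
          by nlinarith [mul_nonneg (sub_nonneg.2 ha) (sub_nonneg.2 hcc.le)]⟩
end

section
/- In the proxy setup (without requiring p(d|c) ≠ p(d|c')): suppose p(c) = 1/2 and p(a|c) = 1−p(a|c') = p(d|c) = 1−p(d|c') ≥ 1/2. If E[Y|a,c] − E[Y|a,c'] ≥ E[Y|a',c'] − E[Y|a',c] ≥ 0, then E[Y|a,d] − E[Y|a,d'] ≥ E[Y|a',d'] − E[Y|a',d] ≥ 0. -/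
set_option maxHeartbeats 1000000 in
/-- Proxy setup: if p(c) = 1/2, p(a|c) = p(a'|c') = p(d|c) = p(d'|c') ≥ 1/2 and
E[Y|a,c] - E[Y|a,c'] ≥ E[Y|a',c'] - E[Y|a',c] ≥ 0, then
E[Y|a,d] - E[Y|a,d'] ≥ E[Y|a',d'] - E[Y|a',d] ≥ 0. -/
theorem stmt13 (pc pdc pdc' pac pac' Yac Yac' Ybc Ybc' : ℝ)
    (hpc0 : 0 < pc) (hpc1 : pc < 1)
    (hpdc0 : 0 < pdc) (hpdc1 : pdc < 1) (hpdc'0 : 0 < pdc') (hpdc'1 : pdc' < 1)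
    (hpac0 : 0 < pac) (hpac1 : pac < 1) (hpac'0 : 0 < pac') (hpac'1 : pac' < 1)
    (hc : pc = 1/2)
    (h1 : pac = 1 - pac') (h2 : pac = pdc) (h3 : pdc = 1 - pdc') (h4 : 1/2 ≤ pac)
    (hY1 : Yac - Yac' ≥ Ybc' - Ybc) (hY2 : Ybc' - Ybc ≥ 0) :
    condExp Yac Yac' (pcGiven pac pac' pdc pdc' pc) - condExp Yac Yac' (pcGiven pac pac' (1 - pdc) (1 - pdc') pc) ≥ condExp Ybc Ybc' (pcGiven (1 - pac) (1 - pac') (1 - pdc) (1 - pdc') pc) - condExp Ybc Ybc' (pcGiven (1 - pac) (1 - pac') pdc pdc' pc) ∧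
    condExp Ybc Ybc' (pcGiven (1 - pac) (1 - pac') (1 - pdc) (1 - pdc') pc) - condExp Ybc Ybc' (pcGiven (1 - pac) (1 - pac') pdc pdc' pc) ≥ 0 := by
  subst hc
  have hd' : pdc' = 1 - pac := by linarith
  have ha' : pac' = 1 - pac := by linarith
  subst h2; subst hd'; subst ha'
  set p := pac with hp
  have hden : p * p + (1 - p) * (1 - p) > 0 := by nlinarith
  have e1 : pcGiven p (1 - p) p (1 - p) (1/2) = p * p / (p * p + (1 - p) * (1 - p)) := by
    unfold pcGiven; rw [div_eq_div_iff (by nlinarith) (by nlinarith)]; ring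
  have e2 : pcGiven p (1 - p) (1 - p) (1 - (1 - p)) (1/2) = 1/2 := by
    unfold pcGiven; rw [div_eq_div_iff (by nlinarith) (by norm_num)]; ring
  have e3 : pcGiven (1 - p) (1 - (1 - p)) (1 - p) (1 - (1 - p)) (1/2)
      = (1 - p) * (1 - p) / (p * p + (1 - p) * (1 - p)) := by
    unfold pcGiven; rw [div_eq_div_iff (by nlinarith) (by nlinarith)]; ring
  have e4 : pcGiven (1 - p) (1 - (1 - p)) p (1 - p) (1/2) = 1/2 := by
    unfold pcGiven; rw [div_eq_div_iff (by nlinarith) (by norm_num)]; ring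
  rw [e1, e2, e3, e4]
  set w := p * p / (p * p + (1 - p) * (1 - p)) with hw
  have hw2 : (1 - p) * (1 - p) / (p * p + (1 - p) * (1 - p)) = 1 - w := by
    rw [hw]; field_simp; ring
  rw [hw2]
  have hwge : w ≥ 1/2 := by
    rw [hw, ge_iff_le, le_div_iff₀ hden]; nlinarith
  unfold condExp
  have hkey := mul_le_mul_of_nonneg_right hY1 (by linarith : (0:ℝ) ≤ w - 1/2)
  have hkey2 := mul_nonneg hY2 (by linarith : (0:ℝ) ≤ w - 1/2)
  constructor <;> nlinarith [hkey, hkey2]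
end

section
/- In the proxy setup: if E[Y|a,d] ≥ E[Y|a,d'] and E[Y|a,c] < E[Y|a,c'], then p(c|a,d) ≤ p(c|a,d') and consequently p(d|c)·p(d'|c') ≤ p(d'|c)·p(d|c') (equivalently, p(d|c)/p(d|c') ≤ p(d'|c)/p(d'|c')). -/
/-- Proxy setup: if E[Y|a,d] ≥ E[Y|a,d'] and E[Y|a,c] < E[Y|a,c'], then
p(c|a,d) ≤ p(c|a,d') and p(d|c) p(d'|c') ≤ p(d'|c) p(d|c'). -/
theorem stmt15 (pc pdc pdc' pac pac' Yac Yac' Ybc Ybc' : ℝ)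
    (hpc0 : 0 < pc) (hpc1 : pc < 1)
    (hpdc0 : 0 < pdc) (hpdc1 : pdc < 1) (hpdc'0 : 0 < pdc') (hpdc'1 : pdc' < 1)
    (hpac0 : 0 < pac) (hpac1 : pac < 1) (hpac'0 : 0 < pac') (hpac'1 : pac' < 1)
    (hne : pdc ≠ pdc')
    (hEY : condExp Yac Yac' (pcGiven pac pac' pdc pdc' pc) ≥ condExp Yac Yac' (pcGiven pac pac' (1 - pdc) (1 - pdc') pc))
    (hYC : Yac < Yac') :
    pcGiven pac pac' pdc pdc' pc ≤ pcGiven pac pac' (1 - pdc) (1 - pdc') pc ∧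
    pdc * (1 - pdc') ≤ (1 - pdc) * pdc' := by
  have hw : pcGiven pac pac' pdc pdc' pc ≤ pcGiven pac pac' (1 - pdc) (1 - pdc') pc := by
    unfold condExp at hEY
    nlinarith [hEY, hYC]
  refine ⟨hw, ?_⟩
  have h3 : 0 < 1 - pc := by linarith
  have hD1 : 0 < pac * pdc * pc + pac' * pdc' * (1 - pc) := by positivity
  have hD2 : 0 < pac * (1 - pdc) * pc + pac' * (1 - pdc') * (1 - pc) := by
    have h1 : 0 < 1 - pdc := by linarith
    have h2 : 0 < 1 - pdc' := by linarith
    positivity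
  unfold pcGiven at hw
  rw [div_le_div_iff₀ hD1 hD2] at hw
  nlinarith [hw, mul_pos hpac0 hpac'0, mul_pos (mul_pos hpac0 hpac'0) (mul_pos hpc0 (by linarith : (0:ℝ) < 1 - pc))]
end

section
/- In the proxy setup (without requiring p(d|c) ≠ p(d|c')): suppose p(c) = 1/2, p(d|c) = 1−p(d|c') (i.e., p(d|c) = p(d'|c')), and 1−p(a|c') ≥ p(a|c) ≥ 1/2 (i.e., p(a'|c') ≥ p(a|c) ≥ 1/2). Then p(c|a,d) ≥ 1−p(c|a',d') (i.e., p(c|a,d) ≥ p(c'|a',d')), p(c|a,d') ≥ 1−p(c|a',d) (i.e., p(c|a,d') ≥ p(c'|a',d)), and p(c|a,d)·p(d) + p(c|a,d')·p(d') ≥ 1/2, where p(d) = p(d|c)p(c)+p(d|c')p(c') and p(d') = 1−p(d). -/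
/-- Proxy setup: if p(c) = 1/2, p(d|c) = p(d'|c') and p(a'|c') ≥ p(a|c) ≥ 1/2,
then p(c|a,d) ≥ p(c'|a',d'), p(c|a,d') ≥ p(c'|a',d) and
p(c|a,d) p(d) + p(c|a,d') p(d') ≥ 1/2. -/
theorem stmt17 (pc pdc pdc' pac pac' : ℝ)
    (hpc0 : 0 < pc) (hpc1 : pc < 1)
    (hpdc0 : 0 < pdc) (hpdc1 : pdc < 1) (hpdc'0 : 0 < pdc') (hpdc'1 : pdc' < 1)
    (hpac0 : 0 < pac) (hpac1 : pac < 1) (hpac'0 : 0 < pac') (hpac'1 : pac' < 1)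
    (hc : pc = 1/2) (hd : pdc = 1 - pdc')
    (ha1 : pac ≤ 1 - pac') (ha2 : 1/2 ≤ pac) :
    pcGiven pac pac' pdc pdc' pc ≥ 1 - (pcGiven (1 - pac) (1 - pac') (1 - pdc) (1 - pdc') pc) ∧
    pcGiven pac pac' (1 - pdc) (1 - pdc') pc ≥ 1 - (pcGiven (1 - pac) (1 - pac') pdc pdc' pc) ∧
    pcGiven pac pac' pdc pdc' pc * (pdc * pc + pdc' * (1 - pc)) + pcGiven pac pac' (1 - pdc) (1 - pdc') pc * (1 - (pdc * pc + pdc' * (1 - pc))) ≥ 1/2 := by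
  subst hc hd
  unfold pcGiven
  have h1 : (0:ℝ) < pac * (1 - pdc') * (1/2) + pac' * pdc' * (1 - 1/2) := by nlinarith
  have h2 : (0:ℝ) < (1 - pac) * (1 - (1 - pdc')) * (1/2) + (1 - pac') * (1 - pdc') * (1 - 1/2) := by nlinarith
  have h3 : (0:ℝ) < pac * (1 - (1 - pdc')) * (1/2) + pac' * (1 - pdc') * (1 - 1/2) := by nlinarith
  have h4 : (0:ℝ) < (1 - pac) * (1 - pdc') * (1/2) + (1 - pac') * pdc' * (1 - 1/2) := by nlinarith
  refine ⟨?_, ?_, ?_⟩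
  · rw [ge_iff_le, sub_le_iff_le_add, div_add_div _ _ (ne_of_gt h1) (ne_of_gt h2),
      le_div_iff₀ (by positivity)]
    nlinarith [mul_pos h1 h2, sq_nonneg (pac - pac'), mul_nonneg (mul_nonneg hpdc'0.le (sub_nonneg.2 hpdc'1.le)) (sub_nonneg.2 (by nlinarith : pac'*(1-pac') ≤ pac*(1-pac)))]
  · rw [ge_iff_le, sub_le_iff_le_add, div_add_div _ _ (ne_of_gt h3) (ne_of_gt h4),
      le_div_iff₀ (by positivity)]
    nlinarith [mul_pos h3 h4, mul_nonneg (mul_nonneg hpdc'0.le (sub_nonneg.2 hpdc'1.le)) (sub_nonneg.2 (by nlinarith : pac'*(1-pac') ≤ pac*(1-pac)))]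
  · have e : (1 - pdc') * (1/2) + pdc' * (1 - 1/2) = 1/2 := by ring
    rw [ge_iff_le, e, div_mul_eq_mul_div, div_mul_eq_mul_div,
      div_add_div _ _ (ne_of_gt h1) (ne_of_gt h3), le_div_iff₀ (by positivity)]
    nlinarith [mul_pos h1 h3, mul_nonneg (mul_nonneg hpdc'0.le (sub_nonneg.2 hpdc'1.le)) (sub_nonneg.2 (by nlinarith : pac'^2 ≤ pac^2))]
end
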